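/- arXiv:math/0506044 — 5 statements merged into one kernel-verified Lean document; each statement's English description precedes it below -/
import Mathlib

section
/- Let G ⊂ ℝ be a nonempty open interval and S a set of continuous functions h : ℝ → [-∞,∞) with S ⊇ {h_λ : λ ∈ G}; assume Λ(h) exists for all h ∈ S and L(λ) is finite for all λ ∈ G. If ran (L|_G)'_- ∪ ran (L|_G)'_+ ⊇ Dom(l_0) ∩ {x : l_1(x) > −Λ̄(0)} (where Λ̄(0) = log limsup_α μ_α(ℝ)^{t_α}), then (μ_α) satisfies a vague large deviation principle with powers (t_α) whose rate function J satisfies J(x) = L|_G*(x) = Λ|_S*(x) for all x ∈ Dom(J) ∩ {x : J(x) > −Λ̄(0)}. If moreover 0 ∈ G, the principle is narrow and J(x) = L|_G*(x) = Λ|_S*(x) for all x ∈ Dom(J). -/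
open Filter MeasureTheory Topology Set
open scoped ENNReal NNReal

noncomputable section
set_option linter.unusedSectionVars false

variable {X : Type*} [TopologicalSpace X] [MeasurableSpace X]
variable {A : Type*} [Preorder A]

/-- `(∫ e^{h/t_α} dμ_α)^{t_α}` as an extended nonnegative real. -/
noncomputable def expPow (μ : A → Measure X) (t : A → ℝ) (h : X → EReal) (a : A) : ℝ≥0∞ :=
  (∫⁻ x, EReal.exp ((((t a)⁻¹ : ℝ) : EReal) * h x) ∂(μ a)) ^ (t a)

/-- `Λ̄(h) = log limsup_α (∫ e^{h/t_α} dμ_α)^{t_α}`. -/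
noncomputable def LambdaBar (μ : A → Measure X) (t : A → ℝ) (h : X → EReal) : EReal :=
  ENNReal.log (Filter.limsup (expPow μ t h) Filter.atTop)

/-- `Λ̲(h) = log liminf_α (∫ e^{h/t_α} dμ_α)^{t_α}`. -/
noncomputable def LambdaUnder (μ : A → Measure X) (t : A → ℝ) (h : X → EReal) : EReal :=
  ENNReal.log (Filter.liminf (expPow μ t h) Filter.atTop)

/-- `Λ(h)` exists when `Λ̲(h) = Λ̄(h)`. -/
def LambdaExists (μ : A → Measure X) (t : A → ℝ) (h : X → EReal) : Prop :=
  LambdaUnder μ t h = LambdaBar μ t h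

/-- `l₁(x) = −log inf { liminf_α μ_α(G)^{t_α} : G open, x ∈ G }`. -/
noncomputable def lOne (μ : A → Measure X) (t : A → ℝ) (x : X) : EReal :=
  - ENNReal.log (⨅ (G : Set X) (_ : IsOpen G) (_ : x ∈ G),
      Filter.liminf (fun a => μ a G ^ (t a)) Filter.atTop)

/-- `l₀(x) = −log inf { limsup_α μ_α(G)^{t_α} : G open, x ∈ G }`. -/
noncomputable def lZero (μ : A → Measure X) (t : A → ℝ) (x : X) : EReal :=
  - ENNReal.log (⨅ (G : Set X) (_ : IsOpen G) (_ : x ∈ G),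
      Filter.limsup (fun a => μ a G ^ (t a)) Filter.atTop)

/-- The uniform tail condition for a family `T`. -/
def TailCondition (μ : A → Measure X) (t : A → ℝ) (T : Set (X → EReal)) : Prop :=
  ∀ ε : ℝ, 0 < ε → ∃ M : ℝ, ∀ h ∈ T,
    Filter.limsup (fun a =>
        (∫⁻ x in {x | (M : EReal) < h x}, EReal.exp ((((t a)⁻¹ : ℝ) : EReal) * h x) ∂(μ a))
          ^ (t a)) Filter.atTop
      < ENNReal.ofReal ε

/-- Vague large deviation principle with powers `t` and rate function `J`. -/
def VagueLDP (μ : A → Measure X) (t : A → ℝ) (J : X → ℝ≥0∞) : Prop :=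
  LowerSemicontinuous J ∧
  (∀ K : Set X, IsCompact K →
      Filter.limsup (fun a => μ a K ^ (t a)) Filter.atTop ≤ ⨆ x ∈ K, EReal.exp (-(J x : EReal))) ∧
  (∀ G : Set X, IsOpen G →
      (⨆ x ∈ G, EReal.exp (-(J x : EReal))) ≤ Filter.liminf (fun a => μ a G ^ (t a)) Filter.atTop)

/-- Narrow large deviation principle with powers `t` and rate function `J`. -/
def NarrowLDP (μ : A → Measure X) (t : A → ℝ) (J : X → ℝ≥0∞) : Prop :=
  LowerSemicontinuous J ∧
  (∀ F : Set X, IsClosed F →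
      Filter.limsup (fun a => μ a F ^ (t a)) Filter.atTop ≤ ⨆ x ∈ F, EReal.exp (-(J x : EReal))) ∧
  (∀ G : Set X, IsOpen G →
      (⨆ x ∈ G, EReal.exp (-(J x : EReal))) ≤ Filter.liminf (fun a => μ a G ^ (t a)) Filter.atTop)

/-- Exponential tightness of `(μ_α)` with respect to `(t_α)`. -/
def ExpTight (μ : A → Measure X) (t : A → ℝ) : Prop :=
  ∀ ε : ℝ, 0 < ε → ∃ K : Set X, IsCompact K ∧
    Filter.limsup (fun a => μ a Kᶜ ^ (t a)) Filter.atTop < ENNReal.ofReal ε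

/-- The linear function `h_λ(x) = λ x`, as an `EReal`-valued function on `ℝ`. -/
noncomputable def hlin (l : ℝ) : ℝ → EReal := fun x => ((l * x : ℝ) : EReal)

/-- Legendre-Fenchel transform of `L` restricted to `G` (extended by `+∞` off `G`):
`L|_G^*(x) = sup_{λ ∈ G} (λ x − L λ)`. -/
noncomputable def LegG (L : ℝ → ℝ) (G : Set ℝ) (x : ℝ) : EReal :=
  ⨆ l ∈ G, ((l * x - L l : ℝ) : EReal)

/-- Abstract Legendre-Fenchel transform `Λ|_S^*(x) = sup_{h ∈ S} (h(x) − Λ(h))`. -/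
noncomputable def LamStar (μ : A → Measure X) (t : A → ℝ) (S : Set (X → EReal)) (x : X) : EReal :=
  ⨆ h ∈ S, (h x - LambdaBar μ t h)

/-- The union of the ranges of the left and right derivatives of `L` restricted to `G`. -/
def ranLR (L : ℝ → ℝ) (G : Set ℝ) : Set ℝ :=
  {d : ℝ | ∃ l ∈ G, HasDerivWithinAt L d (Set.Iio l) l ∨ HasDerivWithinAt L d (Set.Ioi l) l}


namespace LDPAux

/-- `-log y` as an `ℝ≥0∞`-valued function (sensible for `y ≤ 1`). -/
noncomputable def negLog (y : ℝ≥0∞) : ℝ≥0∞ :=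
  if y = 0 then ⊤ else ENNReal.ofReal (-Real.log y.toReal)

lemma negLog_coe {y : ℝ≥0∞} (hy : y ≤ 1) : ((negLog y : ℝ≥0∞) : EReal) = - ENNReal.log y := by
  rcases eq_or_ne y 0 with rfl | h0
  · simp [negLog]
  · have hytop : y ≠ ⊤ := ne_top_of_le_ne_top ENNReal.one_ne_top hy
    have hpos : 0 < y.toReal := ENNReal.toReal_pos h0 hytop
    have hle1 : y.toReal ≤ 1 := by
      rw [show (1:ℝ) = (1:ℝ≥0∞).toReal by simp]
      exact ENNReal.toReal_mono ENNReal.one_ne_top hy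
    have hlog : Real.log y.toReal ≤ 0 := Real.log_nonpos (le_of_lt hpos) hle1
    rw [negLog, if_neg h0, EReal.coe_ennreal_ofReal, ENNReal.log_pos_real' hpos]
    rw [sup_of_le_left (by linarith : (0:ℝ) ≤ -Real.log y.toReal)]
    exact (EReal.coe_neg _)

lemma exp_neg_negLog {y : ℝ≥0∞} (hy : y ≤ 1) :
    EReal.exp (-((negLog y : ℝ≥0∞) : EReal)) = y := by
  rw [negLog_coe hy, neg_neg, ENNReal.exp_log]

lemma negLog_eq_top_iff {y : ℝ≥0∞} : negLog y = ⊤ ↔ y = 0 := by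
  unfold negLog
  split_ifs with h
  · simp [h]
  · simp [h, ENNReal.ofReal_ne_top]

lemma ereal_lt_neg {a b : EReal} : a < -b ↔ b < -a := by
  rw [← not_le, ← not_le, EReal.neg_le]

lemma ereal_neg_lt {a b : EReal} : -a < b ↔ -b < a := by
  conv_lhs => rw [← neg_neg b]
  rw [ereal_lt_neg, neg_neg]

lemma lt_negLog_iff {c y : ℝ≥0∞} (hy : y ≤ 1) :
    c < negLog y ↔ y < EReal.exp (-(c : EReal)) := by
  rw [← EReal.coe_ennreal_lt_coe_ennreal_iff, negLog_coe hy, ereal_lt_neg,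
    ← EReal.log_exp (-(c : EReal)), ENNReal.log_lt_log_iff, EReal.log_exp]

lemma negLog_le_iff {c y : ℝ≥0∞} (hy : y ≤ 1) :
    negLog y ≤ c ↔ EReal.exp (-(c : EReal)) ≤ y := by
  rw [← not_lt, ← not_lt, lt_negLog_iff hy]

lemma negLog_lt_iff {c y : ℝ≥0∞} (hy : y ≤ 1) :
    negLog y < c ↔ EReal.exp (-(c : EReal)) < y := by
  rw [← EReal.coe_ennreal_lt_coe_ennreal_iff, negLog_coe hy, ereal_neg_lt,
    ← ENNReal.log_lt_log_iff (x := EReal.exp (-(c:EReal))) (y := y), EReal.log_exp]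

lemma le_negLog_iff {c y : ℝ≥0∞} (hy : y ≤ 1) :
    c ≤ negLog y ↔ y ≤ EReal.exp (-(c : EReal)) := by
  rw [← not_lt, ← not_lt, negLog_lt_iff hy]

/-- multiplication by a finite nonzero constant as an order isomorphism of `ℝ≥0∞`. -/
noncomputable def mulIso (c : ℝ≥0∞) (h0 : c ≠ 0) (ht : c ≠ ⊤) : ℝ≥0∞ ≃o ℝ≥0∞ where
  toFun x := c * x
  invFun x := c⁻¹ * x
  left_inv x := by
    show c⁻¹ * (c * x) = x
    rw [← mul_assoc, ENNReal.inv_mul_cancel h0 ht, one_mul]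
  right_inv x := by
    show c * (c⁻¹ * x) = x
    rw [← mul_assoc, ENNReal.mul_inv_cancel h0 ht, one_mul]
  map_rel_iff' := by
    intro a b
    exact ENNReal.mul_le_mul_iff_right h0 ht

lemma limsup_const_mul {α : Type*} {l : Filter α} (u : α → ℝ≥0∞) {c : ℝ≥0∞}
    (h0 : c ≠ 0) (ht : c ≠ ⊤) :
    limsup (fun a => c * u a) l = c * limsup u l := by
  have := (mulIso c h0 ht).limsup_apply (f := l) (u := u)
  exact this.symm

lemma liminf_const_mul {α : Type*} {l : Filter α} (u : α → ℝ≥0∞) {c : ℝ≥0∞}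
    (h0 : c ≠ 0) (ht : c ≠ ⊤) :
    liminf (fun a => c * u a) l = c * liminf u l := by
  have := (mulIso c h0 ht).liminf_apply (f := l) (u := u)
  exact this.symm

end LDPAux

section Part2
namespace LDPAux

variable {A : Type*} [Preorder A]

/-- `μ_a(s)^{t_a}`. -/
def lim0 (μ : A → Measure ℝ) (t : A → ℝ) (s : Set ℝ) : ℝ≥0∞ :=
  limsup (fun a => μ a s ^ (t a)) atTop

def lim1 (μ : A → Measure ℝ) (t : A → ℝ) (s : Set ℝ) : ℝ≥0∞ :=
  liminf (fun a => μ a s ^ (t a)) atTop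

def FF1 (μ : A → Measure ℝ) (t : A → ℝ) (x : ℝ) : ℝ≥0∞ :=
  ⨅ (H : Set ℝ) (_ : IsOpen H) (_ : x ∈ H), lim1 μ t H

def FF0 (μ : A → Measure ℝ) (t : A → ℝ) (x : ℝ) : ℝ≥0∞ :=
  ⨅ (H : Set ℝ) (_ : IsOpen H) (_ : x ∈ H), lim0 μ t H

/-- normal form for `expPow` at a linear function. -/
def Ef (μ : A → Measure ℝ) (t : A → ℝ) (l : ℝ) (a : A) : ℝ≥0∞ :=
  (∫⁻ y, ENNReal.ofReal (Real.exp ((t a)⁻¹ * (l * y))) ∂ (μ a)) ^ (t a)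

variable {μ : A → Measure ℝ} {t : A → ℝ}

lemma expPow_hlin (l : ℝ) : expPow μ t (hlin l) = Ef μ t l := by
  funext a
  unfold expPow Ef hlin
  congr 1

lemma Ef_zero : Ef μ t 0 = fun a => μ a Set.univ ^ (t a) := by
  funext a
  unfold Ef
  simp [lintegral_one]

lemma expPow_zero : expPow μ t (fun _ => (0 : EReal)) = fun a => μ a Set.univ ^ (t a) := by
  funext a
  unfold expPow
  simp [lintegral_one]

lemma lambdaBar_zero_eq : LambdaBar μ t (fun _ => (0 : EReal)) = ENNReal.log (lim0 μ t univ) := by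
  unfold LambdaBar lim0
  rw [expPow_zero]

section bounds
variable (hpos : ∀ a, 0 < t a) (hSub : ∀ a, μ a Set.univ ≤ 1)

include hpos hSub in
lemma PP_le_one (a : A) (s : Set ℝ) : μ a s ^ (t a) ≤ 1 :=
  ENNReal.rpow_le_one (le_trans (measure_mono (subset_univ s)) (hSub a)) (hpos a).le

include hpos hSub in
lemma lim0_le_one (s : Set ℝ) : lim0 μ t s ≤ 1 :=
  limsup_le_of_le (by isBoundedDefault) (Eventually.of_forall fun a => PP_le_one hpos hSub a s)

variable [IsDirected A (· ≤ ·)] [Nonempty A]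

instance : (atTop : Filter A).NeBot := atTop_neBot_iff.mpr ⟨inferInstance, inferInstance⟩

include hpos hSub in
lemma lim1_le_lim0 (s : Set ℝ) : lim1 μ t s ≤ lim0 μ t s := liminf_le_limsup

include hpos hSub in
lemma lim1_le_one (s : Set ℝ) : lim1 μ t s ≤ 1 :=
  (lim1_le_lim0 hpos hSub s).trans (lim0_le_one hpos hSub s)

include hpos hSub in
lemma FF1_le_one (x : ℝ) : FF1 μ t x ≤ 1 :=
  le_trans (iInf_le_of_le univ (by simp [isOpen_univ, lim1_le_one hpos hSub])) le_rfl

include hpos hSub in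
lemma FF0_le_one (x : ℝ) : FF0 μ t x ≤ 1 :=
  le_trans (iInf_le_of_le univ (by simp [isOpen_univ, lim0_le_one hpos hSub])) le_rfl

lemma FF1_le {x : ℝ} {H : Set ℝ} (hHo : IsOpen H) (hxH : x ∈ H) : FF1 μ t x ≤ lim1 μ t H := by
  refine iInf_le_of_le H ?_
  simp [hHo, hxH]

lemma FF0_le {x : ℝ} {H : Set ℝ} (hHo : IsOpen H) (hxH : x ∈ H) : FF0 μ t x ≤ lim0 μ t H := by
  refine iInf_le_of_le H ?_
  simp [hHo, hxH]

include hpos hSub in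
lemma FF1_le_FF0 (x : ℝ) : FF1 μ t x ≤ FF0 μ t x := by
  refine le_iInf fun H => le_iInf fun hHo => le_iInf fun hxH => ?_
  exact (FF1_le hHo hxH).trans (lim1_le_lim0 hpos hSub H)

lemma FF0_le_base (x : ℝ) : FF0 μ t x ≤ lim0 μ t univ := FF0_le isOpen_univ (mem_univ x)

lemma FF0_lt_iff {x : ℝ} {b : ℝ≥0∞} :
    FF0 μ t x < b ↔ ∃ H, IsOpen H ∧ x ∈ H ∧ lim0 μ t H < b := by
  unfold FF0
  simp only [iInf_lt_iff]
  tauto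

lemma FF1_lt_iff {x : ℝ} {b : ℝ≥0∞} :
    FF1 μ t x < b ↔ ∃ H, IsOpen H ∧ x ∈ H ∧ lim1 μ t H < b := by
  unfold FF1
  simp only [iInf_lt_iff]
  tauto

lemma lim1_mono {s s' : Set ℝ} (hpos : ∀ a, 0 < t a) (h : s ⊆ s') : lim1 μ t s ≤ lim1 μ t s' :=
  liminf_le_liminf (Eventually.of_forall fun a =>
    ENNReal.rpow_le_rpow (measure_mono h) (hpos a).le)

lemma lim0_mono {s s' : Set ℝ} (hpos : ∀ a, 0 < t a) (h : s ⊆ s') : lim0 μ t s ≤ lim0 μ t s' :=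
  limsup_le_limsup (Eventually.of_forall fun a =>
    ENNReal.rpow_le_rpow (measure_mono h) (hpos a).le)

/-- bridge to `lOne`. -/
lemma lOne_eq (x : ℝ) : lOne μ t x = - ENNReal.log (FF1 μ t x) := rfl

lemma lZero_eq (x : ℝ) : lZero μ t x = - ENNReal.log (FF0 μ t x) := rfl

end bounds

/-- Chebyshev-type inequality. -/
lemma chebSet (hpos : ∀ a, 0 < t a) {l b : ℝ} {s : Set ℝ}
    (hs : MeasurableSet s) (hb : ∀ y ∈ s, b ≤ l * y) :
    ENNReal.ofReal (Real.exp b) * lim0 μ t s ≤ limsup (Ef μ t l) atTop := by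
  have key : ∀ a, ENNReal.ofReal (Real.exp b) * (μ a s ^ (t a)) ≤ Ef μ t l a := by
    intro a
    have hc : 0 < (t a)⁻¹ := inv_pos.mpr (hpos a)
    have h1 : ENNReal.ofReal (Real.exp ((t a)⁻¹ * b)) * μ a s
        ≤ ∫⁻ y, ENNReal.ofReal (Real.exp ((t a)⁻¹ * (l * y))) ∂ (μ a) := by
      rw [← setLIntegral_const s _]
      refine le_trans (setLIntegral_mono' hs fun y hy => ?_) (setLIntegral_le_lintegral _ _)
      exact ENNReal.ofReal_le_ofReal (Real.exp_le_exp.mpr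
        (mul_le_mul_of_nonneg_left (hb y hy) hc.le))
    calc ENNReal.ofReal (Real.exp b) * (μ a s ^ (t a))
        = (ENNReal.ofReal (Real.exp ((t a)⁻¹ * b)) * μ a s) ^ (t a) := by
          have ht : t a ≠ 0 := (hpos a).ne'
          have hb' : (t a)⁻¹ * b * t a = b := by field_simp
          rw [ENNReal.mul_rpow_of_nonneg _ _ (hpos a).le,
            ENNReal.ofReal_rpow_of_pos (Real.exp_pos _), ← Real.exp_mul, hb']
      _ ≤ Ef μ t l a := ENNReal.rpow_le_rpow h1 (hpos a).le
  calc ENNReal.ofReal (Real.exp b) * lim0 μ t s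
      = limsup (fun a => ENNReal.ofReal (Real.exp b) * (μ a s ^ (t a))) atTop := by
        rw [limsup_const_mul _ (by positivity) ENNReal.ofReal_ne_top]
        rfl
    _ ≤ limsup (Ef μ t l) atTop := limsup_le_limsup (Eventually.of_forall key)

end LDPAux
end Part2

section Part3
namespace LDPAux

variable {A : Type*} [Preorder A] [IsDirected A (· ≤ ·)] [Nonempty A]
variable {μ : A → Measure ℝ} {t : A → ℝ}

lemma ofReal_exp_mul_rpow {T : ℝ} (hT : 0 < T) (q : ℝ) (Z : ℝ≥0∞) :
    (ENNReal.ofReal (Real.exp (T⁻¹ * q)) * Z) ^ T = ENNReal.ofReal (Real.exp q) * Z ^ T := by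
  have hT' : T ≠ 0 := hT.ne'
  have hq : T⁻¹ * q * T = q := by field_simp
  rw [ENNReal.mul_rpow_of_nonneg _ _ hT.le, ENNReal.ofReal_rpow_of_pos (Real.exp_pos _),
    ← Real.exp_mul, hq]

lemma le_inv_mul_of_mul_le {c u v : ℝ≥0∞} (h0 : c ≠ 0) (ht : c ≠ ⊤) (h : c * u ≤ v) :
    u ≤ c⁻¹ * v := by
  calc u = c⁻¹ * (c * u) := by rw [← mul_assoc, ENNReal.inv_mul_cancel h0 ht, one_mul]
  _ ≤ c⁻¹ * v := mul_le_mul_right h _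

lemma limsup_Ef_eq {L : ℝ → ℝ} {l : ℝ}
    (hL : LambdaBar μ t (hlin l) = ((L l : ℝ) : EReal)) :
    limsup (Ef μ t l) atTop = ENNReal.ofReal (Real.exp (L l)) := by
  have h1 : ENNReal.log (limsup (Ef μ t l) atTop) = ((L l : ℝ) : EReal) := by
    rw [← expPow_hlin]
    exact hL
  have h2 := congrArg EReal.exp h1
  rwa [ENNReal.exp_log, EReal.exp_coe] at h2

lemma conv {L : ℝ → ℝ} {l : ℝ} (hex : LambdaExists μ t (hlin l))
    (hL : LambdaBar μ t (hlin l) = ((L l : ℝ) : EReal)) :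
    Tendsto (Ef μ t l) atTop (𝓝 (ENNReal.ofReal (Real.exp (L l)))) := by
  have h0 : liminf (Ef μ t l) atTop = limsup (Ef μ t l) atTop := by
    have h := hex
    unfold LambdaExists LambdaUnder LambdaBar at h
    rw [expPow_hlin] at h
    exact ENNReal.log_injective h
  exact tendsto_of_liminf_eq_limsup (h0.trans (limsup_Ef_eq hL)) (limsup_Ef_eq hL)

lemma cheb (hpos : ∀ a, 0 < t a) {L : ℝ → ℝ} {l : ℝ}
    (hL : LambdaBar μ t (hlin l) = ((L l : ℝ) : EReal)) (x : ℝ) :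
    FF0 μ t x ≤ ENNReal.ofReal (Real.exp (L l - l * x)) := by
  have key : ∀ ε : ℝ, 0 < ε → FF0 μ t x ≤ ENNReal.ofReal (Real.exp (L l - l * x + ε)) := by
    intro ε hε
    set H : Set ℝ := {y | l * x - ε < l * y} with hH
    have hHo : IsOpen H := by
      have : H = (fun y => l * y) ⁻¹' (Ioi (l * x - ε)) := rfl
      rw [this]
      exact isOpen_Ioi.preimage (by continuity)
    have hxH : x ∈ H := by
      simp only [hH, mem_setOf_eq]
      linarith
    have hcheb := chebSet (μ := μ) hpos hHo.measurableSet (l := l) (b := l * x - ε)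
      (fun y hy => le_of_lt hy)
    rw [limsup_Ef_eq hL] at hcheb
    have h2 : lim0 μ t H ≤ (ENNReal.ofReal (Real.exp (l * x - ε)))⁻¹
        * ENNReal.ofReal (Real.exp (L l)) :=
      le_inv_mul_of_mul_le (by positivity) ENNReal.ofReal_ne_top hcheb
    have h3 : (ENNReal.ofReal (Real.exp (l * x - ε)))⁻¹ * ENNReal.ofReal (Real.exp (L l))
        = ENNReal.ofReal (Real.exp (L l - l * x + ε)) := by
      rw [← ENNReal.ofReal_inv_of_pos (Real.exp_pos _), ← Real.exp_neg,
        ← ENNReal.ofReal_mul (Real.exp_pos _).le, ← Real.exp_add]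
      congr 2
      ring
    exact le_trans (FF0_le hHo hxH) (h2.trans_eq h3)
  have htend : Tendsto (fun n : ℕ => ENNReal.ofReal (Real.exp (L l - l * x + 1 / (n + 1))))
      atTop (𝓝 (ENNReal.ofReal (Real.exp (L l - l * x)))) := by
    have h0 : Tendsto (fun n : ℕ => L l - l * x + 1 / ((n : ℝ) + 1)) atTop
        (𝓝 (L l - l * x)) := by
      have := tendsto_one_div_add_atTop_nhds_zero_nat.const_add (L l - l * x)
      simpa using this
    exact (ENNReal.continuous_ofReal.tendsto _).comp ((Real.continuous_exp.tendsto _).comp h0)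
  exact ge_of_tendsto htend (Eventually.of_forall fun n => key _ (by positivity))

lemma varad (hpos : ∀ a, 0 < t a) (hSub : ∀ a, μ a Set.univ ≤ 1)
    {h : ℝ → EReal} (hcont : Continuous h) (htop : ∀ y, h y ≠ ⊤) (x : ℝ) :
    EReal.exp (h x) * FF1 μ t x ≤ liminf (expPow μ t h) atTop := by
  rcases eq_or_ne (h x) ⊥ with hbot | hne
  · simp [hbot]
  · obtain ⟨r, hr⟩ : ∃ r : ℝ, h x = (r : EReal) := ⟨(h x).toReal, (EReal.coe_toReal (htop x) hne).symm⟩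
    have key : ∀ ε : ℝ, 0 < ε → ENNReal.ofReal (Real.exp (r - ε)) * FF1 μ t x
        ≤ liminf (expPow μ t h) atTop := by
      intro ε hε
      set H : Set ℝ := h ⁻¹' (Ioi ((r - ε : ℝ) : EReal)) with hHdef
      have hHo : IsOpen H := isOpen_Ioi.preimage hcont
      have hxH : x ∈ H := by
        simp only [hHdef, mem_preimage, mem_Ioi, hr]
        exact_mod_cast (by linarith : r - ε < r)
      have hptw : ∀ a, ENNReal.ofReal (Real.exp (r - ε)) * (μ a H ^ t a) ≤ expPow μ t h a := by
        intro a
        have h1 : ENNReal.ofReal (Real.exp ((t a)⁻¹ * (r - ε))) * μ a H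
            ≤ ∫⁻ y, EReal.exp ((((t a)⁻¹ : ℝ) : EReal) * h y) ∂ (μ a) := by
          rw [← setLIntegral_const H _]
          refine le_trans (setLIntegral_mono' hHo.measurableSet fun y hy => ?_)
            (setLIntegral_le_lintegral _ _)
          have hy' : ((r - ε : ℝ) : EReal) < h y := hy
          obtain ⟨s, hs⟩ : ∃ s : ℝ, h y = (s : EReal) :=
            ⟨(h y).toReal, (EReal.coe_toReal (htop y) (fun hb => by
              rw [hb] at hy'
              exact absurd hy' (by simp))).symm⟩
          rw [hs, ← EReal.coe_mul, EReal.exp_coe]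
          have hrs : r - ε ≤ s := by
            rw [hs] at hy'
            exact_mod_cast hy'.le
          exact ENNReal.ofReal_le_ofReal (Real.exp_le_exp.mpr
            (mul_le_mul_of_nonneg_left hrs (inv_pos.mpr (hpos a)).le))
        calc ENNReal.ofReal (Real.exp (r - ε)) * (μ a H ^ t a)
            = (ENNReal.ofReal (Real.exp ((t a)⁻¹ * (r - ε))) * μ a H) ^ (t a) := by
              rw [ofReal_exp_mul_rpow (hpos a) _ _]
          _ ≤ expPow μ t h a := ENNReal.rpow_le_rpow h1 (hpos a).le
      calc ENNReal.ofReal (Real.exp (r - ε)) * FF1 μ t x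
          ≤ ENNReal.ofReal (Real.exp (r - ε)) * lim1 μ t H :=
            mul_le_mul_right (FF1_le hHo hxH) _
        _ = liminf (fun a => ENNReal.ofReal (Real.exp (r - ε)) * (μ a H ^ t a)) atTop := by
            rw [liminf_const_mul _ (by positivity) ENNReal.ofReal_ne_top]
            rfl
        _ ≤ liminf (expPow μ t h) atTop := liminf_le_liminf (Eventually.of_forall hptw)
    have htend : Tendsto (fun n : ℕ => ENNReal.ofReal (Real.exp (r - 1 / (n + 1))) * FF1 μ t x)
        atTop (𝓝 (ENNReal.ofReal (Real.exp r) * FF1 μ t x)) := by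
      have h0 : Tendsto (fun n : ℕ => ENNReal.ofReal (Real.exp (r - 1 / ((n : ℝ) + 1))))
          atTop (𝓝 (ENNReal.ofReal (Real.exp r))) := by
        have h1 : Tendsto (fun n : ℕ => r - 1 / ((n : ℝ) + 1)) atTop (𝓝 r) := by
          have := tendsto_one_div_add_atTop_nhds_zero_nat.const_sub r
          simpa using this
        exact (ENNReal.continuous_ofReal.tendsto _).comp ((Real.continuous_exp.tendsto _).comp h1)
      exact ENNReal.Tendsto.mul_const h0
        (Or.inr (ne_top_of_le_ne_top ENNReal.one_ne_top (FF1_le_one hpos hSub x)))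
    have := le_of_tendsto htend (Eventually.of_forall fun n => key (1 / ((n:ℝ) + 1)) (by positivity))
    rwa [hr, EReal.exp_coe]

end LDPAux
end Part3

section Part4
namespace LDPAux

variable {A : Type*} [Preorder A]
variable {μ : A → Measure ℝ} {t : A → ℝ}

lemma sum3_le_max (u v w m : ℝ≥0∞) (hu : u ≤ m) (hv : v ≤ m) (hw : w ≤ m) :
    u + (v + w) ≤ 3 * m := by
  calc u + (v + w) ≤ m + (m + m) := add_le_add hu (add_le_add hv hw)
    _ = 3 * m := by ring

lemma rpow_monotone (T : ℝ) (hT : 0 ≤ T) : Monotone (fun z : ℝ≥0∞ => z ^ T) :=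
  fun _ _ h => ENNReal.rpow_le_rpow h hT

lemma decompose (hpos : ∀ a, 0 < t a) (lam θ x δ : ℝ) (hθ : 0 < θ) (hδ : 0 < δ) (a : A) :
    Ef μ t (lam + θ) a ≤ (3 : ℝ≥0∞) ^ (t a) *
      max (ENNReal.ofReal (Real.exp (θ * (x - δ))) * Ef μ t lam a)
        (max (ENNReal.ofReal (Real.exp ((lam + θ) * x + |lam + θ| * δ))
            * μ a (Ioo (x - δ) (x + δ)) ^ (t a))
          (ENNReal.ofReal (Real.exp (-(θ * (x + δ)))) * Ef μ t (lam + 2 * θ) a)) := by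
  have hT := hpos a
  set c := (t a)⁻¹ with hc
  have hcpos : 0 < c := inv_pos.mpr hT
  set f : ℝ → ℝ≥0∞ := fun y => ENNReal.ofReal (Real.exp (c * ((lam + θ) * y))) with hf
  set B1 : ℝ≥0∞ := ENNReal.ofReal (Real.exp (c * (θ * (x - δ))))
      * ∫⁻ y, ENNReal.ofReal (Real.exp (c * (lam * y))) ∂ (μ a) with hB1
  set B2 : ℝ≥0∞ := ENNReal.ofReal (Real.exp (c * ((lam + θ) * x + |lam + θ| * δ)))
      * μ a (Ioo (x - δ) (x + δ)) with hB2
  set B3 : ℝ≥0∞ := ENNReal.ofReal (Real.exp (c * (-(θ * (x + δ)))))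
      * ∫⁻ y, ENNReal.ofReal (Real.exp (c * ((lam + 2 * θ) * y))) ∂ (μ a) with hB3
  have hsplit : ∫⁻ y, f y ∂ (μ a) ≤ (∫⁻ y in Iic (x - δ), f y ∂ (μ a)) +
      ((∫⁻ y in Ioo (x - δ) (x + δ), f y ∂ (μ a)) + (∫⁻ y in Ici (x + δ), f y ∂ (μ a))) := by
    have hcover : (univ : Set ℝ) ⊆ Iic (x - δ) ∪ (Ioo (x - δ) (x + δ) ∪ Ici (x + δ)) := by
      intro y _
      rcases le_or_gt y (x - δ) with h | h
      · exact Or.inl h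
      · rcases lt_or_ge y (x + δ) with h2 | h2
        · exact Or.inr (Or.inl ⟨h, h2⟩)
        · exact Or.inr (Or.inr h2)
    calc ∫⁻ y, f y ∂ (μ a) = ∫⁻ y in univ, f y ∂ (μ a) := (setLIntegral_univ _).symm
      _ ≤ ∫⁻ y in Iic (x - δ) ∪ (Ioo (x - δ) (x + δ) ∪ Ici (x + δ)), f y ∂ (μ a) :=
          lintegral_mono_set hcover
      _ ≤ _ := le_trans (lintegral_union_le _ _ _)
          (add_le_add_right (lintegral_union_le _ _ _) _)
  have hI1 : ∫⁻ y in Iic (x - δ), f y ∂ (μ a) ≤ B1 := by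
    have hb : ∀ y ∈ Iic (x - δ), f y ≤ ENNReal.ofReal (Real.exp (c * (θ * (x - δ))))
        * ENNReal.ofReal (Real.exp (c * (lam * y))) := by
      intro y hy
      rw [hf, ← ENNReal.ofReal_mul (by positivity), ← Real.exp_add]
      apply ENNReal.ofReal_le_ofReal
      apply Real.exp_le_exp.mpr
      have h1 : θ * y ≤ θ * (x - δ) := mul_le_mul_of_nonneg_left hy hθ.le
      have h2 : c * (θ * y) ≤ c * (θ * (x - δ)) := mul_le_mul_of_nonneg_left h1 hcpos.le
      nlinarith [h2]
    calc ∫⁻ y in Iic (x - δ), f y ∂ (μ a)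
        ≤ ∫⁻ y in Iic (x - δ), ENNReal.ofReal (Real.exp (c * (θ * (x - δ))))
            * ENNReal.ofReal (Real.exp (c * (lam * y))) ∂ (μ a) :=
          setLIntegral_mono' measurableSet_Iic hb
      _ = ENNReal.ofReal (Real.exp (c * (θ * (x - δ))))
            * ∫⁻ y in Iic (x - δ), ENNReal.ofReal (Real.exp (c * (lam * y))) ∂ (μ a) :=
          lintegral_const_mul' _ _ ENNReal.ofReal_ne_top
      _ ≤ B1 := mul_le_mul_right (setLIntegral_le_lintegral _ _) _
  have hI3 : ∫⁻ y in Ici (x + δ), f y ∂ (μ a) ≤ B3 := by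
    have hb : ∀ y ∈ Ici (x + δ), f y ≤ ENNReal.ofReal (Real.exp (c * (-(θ * (x + δ)))))
        * ENNReal.ofReal (Real.exp (c * ((lam + 2 * θ) * y))) := by
      intro y hy
      rw [hf, ← ENNReal.ofReal_mul (by positivity), ← Real.exp_add]
      apply ENNReal.ofReal_le_ofReal
      apply Real.exp_le_exp.mpr
      have h1 : θ * (x + δ) ≤ θ * y := mul_le_mul_of_nonneg_left hy hθ.le
      have h2 : c * (θ * (x + δ)) ≤ c * (θ * y) := mul_le_mul_of_nonneg_left h1 hcpos.le
      nlinarith [h2]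
    calc ∫⁻ y in Ici (x + δ), f y ∂ (μ a)
        ≤ ∫⁻ y in Ici (x + δ), ENNReal.ofReal (Real.exp (c * (-(θ * (x + δ)))))
            * ENNReal.ofReal (Real.exp (c * ((lam + 2 * θ) * y))) ∂ (μ a) :=
          setLIntegral_mono' measurableSet_Ici hb
      _ = ENNReal.ofReal (Real.exp (c * (-(θ * (x + δ)))))
            * ∫⁻ y in Ici (x + δ), ENNReal.ofReal (Real.exp (c * ((lam + 2 * θ) * y))) ∂ (μ a) :=
          lintegral_const_mul' _ _ ENNReal.ofReal_ne_top
      _ ≤ B3 := mul_le_mul_right (setLIntegral_le_lintegral _ _) _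
  have hI2 : ∫⁻ y in Ioo (x - δ) (x + δ), f y ∂ (μ a) ≤ B2 := by
    have hb : ∀ y ∈ Ioo (x - δ) (x + δ), f y
        ≤ ENNReal.ofReal (Real.exp (c * ((lam + θ) * x + |lam + θ| * δ))) := by
      intro y hy
      rw [hf]
      apply ENNReal.ofReal_le_ofReal
      apply Real.exp_le_exp.mpr
      apply mul_le_mul_of_nonneg_left _ hcpos.le
      have h1 : |y - x| ≤ δ := by
        rw [abs_le]
        constructor <;> [linarith [hy.1]; linarith [hy.2]]
      have h2 : (lam + θ) * (y - x) ≤ |lam + θ| * δ := by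
        calc (lam + θ) * (y - x) ≤ |(lam + θ) * (y - x)| := le_abs_self _
          _ = |lam + θ| * |y - x| := abs_mul _ _
          _ ≤ |lam + θ| * δ := mul_le_mul_of_nonneg_left h1 (abs_nonneg _)
      nlinarith [h2]
    calc ∫⁻ y in Ioo (x - δ) (x + δ), f y ∂ (μ a)
        ≤ ∫⁻ _ in Ioo (x - δ) (x + δ),
            ENNReal.ofReal (Real.exp (c * ((lam + θ) * x + |lam + θ| * δ))) ∂ (μ a) :=
          setLIntegral_mono' measurableSet_Ioo hb
      _ = B2 := by rw [setLIntegral_const]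
  have hmax : ∫⁻ y, f y ∂ (μ a) ≤ 3 * max B1 (max B2 B3) := by
    refine hsplit.trans (sum3_le_max _ _ _ _ ?_ ?_ ?_)
    · exact hI1.trans (le_max_left _ _)
    · exact hI2.trans (le_max_of_le_right (le_max_left _ _))
    · exact hI3.trans (le_max_of_le_right (le_max_right _ _))
  have hEf : Ef μ t (lam + θ) a = (∫⁻ y, f y ∂ (μ a)) ^ (t a) := rfl
  rw [hEf]
  calc (∫⁻ y, f y ∂ (μ a)) ^ (t a) ≤ (3 * max B1 (max B2 B3)) ^ (t a) :=
        ENNReal.rpow_le_rpow hmax hT.le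
    _ = (3 : ℝ≥0∞) ^ (t a) * (max B1 (max B2 B3)) ^ (t a) :=
        ENNReal.mul_rpow_of_nonneg _ _ hT.le
    _ = (3 : ℝ≥0∞) ^ (t a) * max (B1 ^ (t a)) (max (B2 ^ (t a)) (B3 ^ (t a))) := by
        rw [(rpow_monotone (t a) hT.le).map_max, (rpow_monotone (t a) hT.le).map_max]
    _ = _ := by
        rw [hB1, hB2, hB3, ofReal_exp_mul_rpow hT, ofReal_exp_mul_rpow hT,
          ofReal_exp_mul_rpow hT]
        rfl

end LDPAux
end Part4

section Part5
namespace LDPAux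

variable {A : Type*} [Preorder A] [IsDirected A (· ≤ ·)] [Nonempty A]
variable {μ : A → Measure ℝ} {t : A → ℝ}

lemma ofReal_exp_mul_exp (p q : ℝ) : ENNReal.ofReal (Real.exp p) * ENNReal.ofReal (Real.exp q)
    = ENNReal.ofReal (Real.exp (p + q)) := by
  rw [← ENNReal.ofReal_mul (Real.exp_pos _).le, ← Real.exp_add]

lemma ofReal_exp_inv_mul (p q : ℝ) :
    (ENNReal.ofReal (Real.exp p))⁻¹ * ENNReal.ofReal (Real.exp q)
      = ENNReal.ofReal (Real.exp (q - p)) := by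
  rw [← ENNReal.ofReal_inv_of_pos (Real.exp_pos _), ← Real.exp_neg,
    ← ENNReal.ofReal_mul (Real.exp_pos _).le, ← Real.exp_add]
  congr 1
  ring

lemma inv_mul_le_of_le_mul {c u v : ℝ≥0∞} (h0 : c ≠ 0) (ht : c ≠ ⊤) (h : v ≤ c * u) :
    c⁻¹ * v ≤ u := by
  calc c⁻¹ * v ≤ c⁻¹ * (c * u) := mul_le_mul_right h _
    _ = u := by rw [← mul_assoc, ENNReal.inv_mul_cancel h0 ht, one_mul]

lemma rpow_base_eventually_le (hpos : ∀ a, 0 < t a) (hto0 : Tendsto t atTop (𝓝 0))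
    {n : ℝ} (hn : 1 ≤ n) {ε : ℝ} (hε : 0 < ε) :
    ∀ᶠ a in atTop, (ENNReal.ofReal n) ^ (t a) ≤ ENNReal.ofReal (Real.exp ε) := by
  have hlogn : 0 ≤ Real.log n := Real.log_nonneg hn
  have hev : ∀ᶠ a in atTop, t a < ε / (Real.log n + 1) :=
    hto0.eventually_lt_const (by positivity)
  filter_upwards [hev] with a ha
  have h0n : 0 < n := lt_of_lt_of_le one_pos hn
  rw [ENNReal.ofReal_rpow_of_pos h0n]
  apply ENNReal.ofReal_le_ofReal
  rw [Real.rpow_def_of_pos h0n]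
  apply Real.exp_le_exp.mpr
  calc Real.log n * t a ≤ Real.log n * (ε / (Real.log n + 1)) :=
        mul_le_mul_of_nonneg_left ha.le hlogn
    _ = ε * (Real.log n / (Real.log n + 1)) := by ring
    _ ≤ ε * 1 := by
        refine mul_le_mul_of_nonneg_left ?_ hε.le
        rw [div_le_one (by positivity)]
        linarith
    _ = ε := mul_one ε

set_option maxHeartbeats 1600000 in
lemma starRight (hpos : ∀ a, 0 < t a) (hto0 : Tendsto t atTop (𝓝 0))
    {L : ℝ → ℝ} {lam x a0 : ℝ} (ha0 : 0 < a0)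
    (hconv : ∀ u : ℝ, lam ≤ u → u < lam + a0 →
      Tendsto (Ef μ t u) atTop (𝓝 (ENNReal.ofReal (Real.exp (L u)))))
    (hder : Tendsto (fun u => (L u - L lam) / (u - lam)) (𝓝[>] lam) (𝓝 x))
    {H : Set ℝ} (hHo : IsOpen H) (hxH : x ∈ H) :
    ENNReal.ofReal (Real.exp (L lam - lam * x)) ≤ lim1 μ t H := by
  suffices key : ∀ ρ : ℝ, 0 < ρ → ENNReal.ofReal (Real.exp (L lam - lam * x - ρ)) ≤ lim1 μ t H by
    have htend : Tendsto (fun m : ℕ => ENNReal.ofReal (Real.exp (L lam - lam * x - 1 / (m + 1))))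
        atTop (𝓝 (ENNReal.ofReal (Real.exp (L lam - lam * x)))) := by
      have h0 : Tendsto (fun m : ℕ => L lam - lam * x - 1 / ((m : ℝ) + 1)) atTop
          (𝓝 (L lam - lam * x)) := by
        have := tendsto_one_div_add_atTop_nhds_zero_nat.const_sub (L lam - lam * x)
        simpa using this
      exact (ENNReal.continuous_ofReal.tendsto _).comp ((Real.continuous_exp.tendsto _).comp h0)
    exact le_of_tendsto htend (Eventually.of_forall fun m => key (1 / ((m : ℝ) + 1)) (by positivity))
  intro ρ hρ
  obtain ⟨δ0, hδ0, hIoo⟩ : ∃ δ0 > 0, Ioo (x - δ0) (x + δ0) ⊆ H := by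
    obtain ⟨r, hr, hball⟩ := Metric.isOpen_iff.mp hHo x hxH
    exact ⟨r, hr, by rwa [← Real.ball_eq_Ioo]⟩
  set δ := min δ0 (ρ / (4 * (|lam| + 1))) with hδdef
  have hδ : 0 < δ := lt_min hδ0 (by positivity)
  have hδδ0 : δ ≤ δ0 := min_le_left _ _
  have habs : 0 < |lam| + 1 := by positivity
  have hδρ : (|lam| + 1) * δ ≤ ρ / 4 := by
    have h1 : δ ≤ ρ / (4 * (|lam| + 1)) := min_le_right _ _
    calc (|lam| + 1) * δ ≤ (|lam| + 1) * (ρ / (4 * (|lam| + 1))) :=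
          mul_le_mul_of_nonneg_left h1 habs.le
      _ = ρ / 4 := by field_simp
  have hδρ4 : δ ≤ ρ / 4 := by nlinarith [abs_nonneg lam]
  set η := δ / 4 with hηdef
  have hηpos : 0 < η := by positivity
  have hslope : ∀ᶠ u in 𝓝[>] lam, |(L u - L lam) / (u - lam) - x| < η := by
    have := Metric.tendsto_nhds.mp hder η hηpos
    simpa [Real.dist_eq] using this
  obtain ⟨w, hw, hIoosub⟩ := mem_nhdsGT_iff_exists_Ioo_subset.mp hslope
  have hlamw : lam < w := hw
  set θ := min ((w - lam) / 3) (min (a0 / 3) 1) with hθdef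
  have hθ : 0 < θ := lt_min (by linarith) (lt_min (by linarith) one_pos)
  have hθ1 : θ ≤ 1 := le_trans (min_le_right _ _) (min_le_right _ _)
  have hθa0 : 2 * θ < a0 := by
    have : θ ≤ a0 / 3 := le_trans (min_le_right _ _) (min_le_left _ _)
    linarith
  have hθw : lam + 2 * θ < w := by
    have : θ ≤ (w - lam) / 3 := min_le_left _ _
    linarith
  have hmem1 : lam + θ ∈ Ioo lam w := ⟨by linarith, by linarith⟩
  have hmem2 : lam + 2 * θ ∈ Ioo lam w := ⟨by linarith, by linarith⟩
  have hs1 : |(L (lam + θ) - L lam) / θ - x| < η := by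
    have := hIoosub hmem1
    simpa using this
  have hs2 : |(L (lam + 2 * θ) - L lam) / (2 * θ) - x| < η := by
    have := hIoosub hmem2
    simpa using this
  set s1 := (L (lam + θ) - L lam) / θ with hs1def
  set s2 := (L (lam + 2 * θ) - L lam) / (2 * θ) with hs2def
  have hLθ : L (lam + θ) = L lam + θ * s1 := by
    rw [hs1def]
    field_simp
    ring
  have hL2θ : L (lam + 2 * θ) = L lam + 2 * θ * s2 := by
    rw [hs2def]
    field_simp
    ring
  set ε := min (θ * δ / 16) (ρ / 8) with hεdef
  have hεpos : 0 < ε := lt_min (by positivity) (by positivity)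
  have hεδ : ε ≤ θ * δ / 16 := min_le_left _ _
  have hερ : ε ≤ ρ / 8 := min_le_right _ _
  have hc1 := hconv (lam + θ) (by linarith) (by linarith)
  have hc0 := hconv lam le_rfl (by linarith)
  have hc2 := hconv (lam + 2 * θ) (by linarith) (by linarith)
  have ev1 : ∀ᶠ a in atTop, ENNReal.ofReal (Real.exp (L (lam + θ) - ε)) < Ef μ t (lam + θ) a :=
    hc1.eventually_const_lt (by
      exact (ENNReal.ofReal_lt_ofReal_iff (Real.exp_pos _)).mpr
        (Real.exp_lt_exp.mpr (by linarith)))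
  have ev2 : ∀ᶠ a in atTop, Ef μ t lam a ≤ ENNReal.ofReal (Real.exp (L lam + ε)) :=
    (hc0.eventually_lt_const (by
      exact (ENNReal.ofReal_lt_ofReal_iff (Real.exp_pos _)).mpr
        (Real.exp_lt_exp.mpr (by linarith)))).mono fun a h => h.le
  have ev3 : ∀ᶠ a in atTop,
      Ef μ t (lam + 2 * θ) a ≤ ENNReal.ofReal (Real.exp (L (lam + 2 * θ) + ε)) :=
    (hc2.eventually_lt_const (by
      exact (ENNReal.ofReal_lt_ofReal_iff (Real.exp_pos _)).mpr
        (Real.exp_lt_exp.mpr (by linarith)))).mono fun a h => h.le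
  have ev4 : ∀ᶠ a in atTop, (3 : ℝ≥0∞) ^ (t a) ≤ ENNReal.ofReal (Real.exp ε) := by
    have h3 : ((3 : ℝ≥0∞)) = ENNReal.ofReal (3 : ℝ) := by norm_num
    rw [h3]
    exact rpow_base_eventually_le hpos hto0 (by norm_num) hεpos
  -- gaps
  have hs1ab := abs_lt.mp hs1
  have hs2ab := abs_lt.mp hs2
  have hgap1 : ε + (θ * (x - δ) + (L lam + ε)) ≤ L (lam + θ) - ε := by
    rw [hLθ]
    nlinarith [hs1ab.1, hθ, hδ, hεδ]
  have hgap2 : ε + (-(θ * (x + δ)) + (L (lam + 2 * θ) + ε)) ≤ L (lam + θ) - ε := by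
    rw [hLθ, hL2θ]
    nlinarith [hs1ab.1, hs2ab.2, hθ, hδ, hεδ]
  -- middle domination
  have evmid : ∀ᶠ a in atTop,
      ENNReal.ofReal (Real.exp (L (lam + θ) - ε - (ε + ((lam + θ) * x + |lam + θ| * δ))))
        ≤ μ a H ^ (t a) := by
    filter_upwards [ev1, ev2, ev3, ev4] with a h1 h2 h3 h4
    have hμIoo : μ a (Ioo (x - δ) (x + δ)) ^ (t a) ≤ μ a H ^ (t a) := by
      refine ENNReal.rpow_le_rpow (measure_mono ?_) (hpos a).le
      refine subset_trans ?_ hIoo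
      exact Ioo_subset_Ioo (by linarith) (by linarith)
    have hdec := decompose (μ := μ) hpos lam θ x δ hθ hδ a
    have step1 : Ef μ t (lam + θ) a ≤ ENNReal.ofReal (Real.exp ε) *
        max (ENNReal.ofReal (Real.exp (θ * (x - δ))) * ENNReal.ofReal (Real.exp (L lam + ε)))
          (max (ENNReal.ofReal (Real.exp ((lam + θ) * x + |lam + θ| * δ)) * μ a H ^ (t a))
            (ENNReal.ofReal (Real.exp (-(θ * (x + δ))))
              * ENNReal.ofReal (Real.exp (L (lam + 2 * θ) + ε)))) := by
      refine hdec.trans (mul_le_mul' h4 ?_)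
      exact max_le_max (mul_le_mul_right h2 _)
        (max_le_max (mul_le_mul_right hμIoo _) (mul_le_mul_right h3 _))
    have step2 : Ef μ t (lam + θ) a ≤
        max (ENNReal.ofReal (Real.exp (L (lam + θ) - ε)))
          (ENNReal.ofReal (Real.exp (ε + ((lam + θ) * x + |lam + θ| * δ))) * μ a H ^ (t a)) := by
      refine step1.trans ?_
      rw [mul_max, mul_max]
      refine max_le ?_ (max_le ?_ ?_)
      · refine le_max_of_le_left ?_
        rw [ofReal_exp_mul_exp, ofReal_exp_mul_exp]
        exact ENNReal.ofReal_le_ofReal (Real.exp_le_exp.mpr hgap1)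
      · refine le_max_of_le_right ?_
        rw [← mul_assoc, ofReal_exp_mul_exp]
      · refine le_max_of_le_left ?_
        rw [ofReal_exp_mul_exp, ofReal_exp_mul_exp]
        exact ENNReal.ofReal_le_ofReal (Real.exp_le_exp.mpr hgap2)
    have hlt := lt_of_lt_of_le h1 step2
    rcases lt_max_iff.mp hlt with hbad | hgood
    · exact absurd hbad (lt_irrefl _)
    · have := inv_mul_le_of_le_mul (c := ENNReal.ofReal (Real.exp (ε + ((lam + θ) * x + |lam + θ| * δ))))
        (by positivity) ENNReal.ofReal_ne_top hgood.le
      rwa [ofReal_exp_inv_mul] at this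
  have hfinal : ENNReal.ofReal (Real.exp (L (lam + θ) - ε - (ε + ((lam + θ) * x + |lam + θ| * δ))))
      ≤ lim1 μ t H := le_liminf_of_le (by isBoundedDefault) evmid
  refine le_trans (ENNReal.ofReal_le_ofReal (Real.exp_le_exp.mpr ?_)) hfinal
  -- final real inequality
  have habs2 : |lam + θ| ≤ |lam| + 1 := by
    calc |lam + θ| ≤ |lam| + |θ| := abs_add_le _ _
      _ ≤ |lam| + 1 := by rw [abs_of_pos hθ]; linarith
  have hterm : |lam + θ| * δ ≤ ρ / 4 := le_trans (mul_le_mul_of_nonneg_right habs2 hδ.le) hδρ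
  rw [hLθ]
  nlinarith [hs1ab.1, hθ, hδ, hεδ, hθ1, hηpos]

end LDPAux
end Part5

section Part6
namespace LDPAux

variable {A : Type*} [Preorder A] [IsDirected A (· ≤ ·)] [Nonempty A]
variable {μ : A → Measure ℝ} {t : A → ℝ}

lemma Ef_map_neg (u : ℝ) (a : A) :
    Ef (fun a => Measure.map Neg.neg (μ a)) t u a = Ef μ t (-u) a := by
  unfold Ef
  congr 1
  rw [lintegral_map ?_ measurable_neg]
  · refine lintegral_congr fun y => ?_
    congr 2
    ring
  · exact (ENNReal.continuous_ofReal.comp (Real.continuous_exp.comp (by continuity))).measurable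

lemma starLeft (hpos : ∀ a, 0 < t a) (hto0 : Tendsto t atTop (𝓝 0))
    {L : ℝ → ℝ} {lam x a0 : ℝ} (ha0 : 0 < a0)
    (hconv : ∀ u : ℝ, lam - a0 < u → u ≤ lam →
      Tendsto (Ef μ t u) atTop (𝓝 (ENNReal.ofReal (Real.exp (L u)))))
    (hder : Tendsto (fun u => (L u - L lam) / (u - lam)) (𝓝[<] lam) (𝓝 x))
    {H : Set ℝ} (hHo : IsOpen H) (hxH : x ∈ H) :
    ENNReal.ofReal (Real.exp (L lam - lam * x)) ≤ lim1 μ t H := by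
  set μ' : A → Measure ℝ := fun a => Measure.map Neg.neg (μ a) with hμ'
  set L' : ℝ → ℝ := fun u => L (-u) with hL'
  set H' : Set ℝ := Neg.neg ⁻¹' H with hH'
  have hH'o : IsOpen H' := hHo.preimage continuous_neg
  have hxH' : -x ∈ H' := by
    simp only [hH', mem_preimage, neg_neg]
    exact hxH
  have hconv' : ∀ u : ℝ, -lam ≤ u → u < -lam + a0 →
      Tendsto (Ef μ' t u) atTop (𝓝 (ENNReal.ofReal (Real.exp (L' u)))) := by
    intro u h1 h2
    have hEq : Ef μ' t u = Ef μ t (-u) := funext fun a => Ef_map_neg u a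
    rw [hEq, hL']
    exact hconv (-u) (by linarith) (by linarith)
  have hneg_tendsto : Tendsto (fun u : ℝ => -u) (𝓝[>] (-lam)) (𝓝[<] lam) := by
    rw [tendsto_nhdsWithin_iff]
    constructor
    · have := (continuous_neg.tendsto (-lam)).mono_left (nhdsWithin_le_nhds (s := Ioi (-lam)))
      simpa using this
    · filter_upwards [self_mem_nhdsWithin] with u hu
      simp only [mem_Iio]
      simp only [mem_Ioi] at hu
      linarith
  have hder' : Tendsto (fun u => (L' u - L' (-lam)) / (u - (-lam))) (𝓝[>] (-lam)) (𝓝 (-x)) := by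
    have hcomp : Tendsto ((fun v => -((L v - L lam) / (v - lam))) ∘ (fun u : ℝ => -u))
        (𝓝[>] (-lam)) (𝓝 (-x)) := (hder.neg).comp hneg_tendsto
    refine hcomp.congr fun u => ?_
    simp only [Function.comp_apply, hL', neg_neg]
    rw [← div_neg]
    congr 1
    ring
  have hmain := starRight (μ := μ') hpos hto0 ha0 hconv' hder' hH'o hxH'
  have hμ'H : (fun a => μ' a H' ^ (t a)) = fun a => μ a H ^ (t a) := by
    funext a
    congr 1
    rw [hμ']
    rw [Measure.map_apply measurable_neg hH'o.measurableSet]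
    congr 1
    ext y
    simp [hH']
  have hlim : lim1 μ' t H' = lim1 μ t H := by
    unfold lim1
    rw [hμ'H]
  rw [hlim] at hmain
  have : L' (-lam) - (-lam) * (-x) = L lam - lam * x := by
    simp only [hL', neg_neg]
    ring
  rwa [this] at hmain

lemma star_ranLR (hpos : ∀ a, 0 < t a) (hto0 : Tendsto t atTop (𝓝 0))
    {L : ℝ → ℝ} {G : Set ℝ} (hGopen : IsOpen G)
    (hconvG : ∀ l ∈ G, Tendsto (Ef μ t l) atTop (𝓝 (ENNReal.ofReal (Real.exp (L l)))))
    {x : ℝ} (hx : x ∈ ranLR L G) :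
    ∃ l ∈ G, ENNReal.ofReal (Real.exp (L l - l * x)) ≤ FF1 μ t x := by
  obtain ⟨l, hlG, hcase⟩ := hx
  obtain ⟨r, hr, hball⟩ := Metric.isOpen_iff.mp hGopen l hlG
  refine ⟨l, hlG, le_iInf fun H => le_iInf fun hHo => le_iInf fun hxH => ?_⟩
  rcases hcase with hleft | hright
  · -- left derivative on Iio l
    have hder : Tendsto (fun u => (L u - L l) / (u - l)) (𝓝[<] l) (𝓝 x) := by
      have h1 := hasDerivWithinAt_iff_tendsto_slope.mp hleft
      have h2 : Iio l \ {l} = Iio l := diff_singleton_eq_self (by simp)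
      rw [h2] at h1
      refine h1.congr fun u => ?_
      rw [slope_def_field]
    refine starLeft hpos hto0 hr ?_ hder hHo hxH
    intro u h1 h2
    refine hconvG u (hball ?_)
    simp only [Metric.mem_ball, Real.dist_eq, abs_lt]
    constructor <;> linarith
  · -- right derivative on Ioi l
    have hder : Tendsto (fun u => (L u - L l) / (u - l)) (𝓝[>] l) (𝓝 x) := by
      have h1 := hasDerivWithinAt_iff_tendsto_slope.mp hright
      have h2 : Ioi l \ {l} = Ioi l := diff_singleton_eq_self (by simp)
      rw [h2] at h1
      refine h1.congr fun u => ?_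
      rw [slope_def_field]
    refine starRight hpos hto0 hr ?_ hder hHo hxH
    intro u h1 h2
    refine hconvG u (hball ?_)
    simp only [Metric.mem_ball, Real.dist_eq, abs_lt]
    constructor <;> linarith

end LDPAux
end Part6

section Part7
namespace LDPAux

variable {A : Type*} [Preorder A] [IsDirected A (· ≤ ·)] [Nonempty A]
variable {μ : A → Measure ℝ} {t : A → ℝ}

lemma pinch (hpos : ∀ a, 0 < t a) (hSub : ∀ a, μ a Set.univ ≤ 1)
    (hto0 : Tendsto t atTop (𝓝 0))
    {L : ℝ → ℝ} {G : Set ℝ} (hGopen : IsOpen G)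
    (hconvG : ∀ l ∈ G, Tendsto (Ef μ t l) atTop (𝓝 (ENNReal.ofReal (Real.exp (L l)))))
    (hLam : ∀ l ∈ G, LambdaBar μ t (hlin l) = ((L l : ℝ) : EReal))
    {x : ℝ} (hx : x ∈ ranLR L G) :
    ∃ l ∈ G, FF0 μ t x = ENNReal.ofReal (Real.exp (L l - l * x))
      ∧ FF1 μ t x = ENNReal.ofReal (Real.exp (L l - l * x)) := by
  obtain ⟨l, hlG, hstar⟩ := star_ranLR hpos hto0 hGopen hconvG hx
  have hch := cheb hpos (hLam l hlG) x
  have h10 := FF1_le_FF0 hpos hSub x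
  exact ⟨l, hlG, le_antisymm hch (hstar.trans h10),
    le_antisymm (h10.trans hch) hstar⟩

lemma limsup_finsetSup_le {ι : Type*} (s : Finset ι) (f : ι → A → ℝ≥0∞) :
    limsup (fun a => s.sup (fun i => f i a)) atTop ≤ s.sup (fun i => limsup (f i) atTop) := by
  classical
  induction s using Finset.induction_on with
  | empty => simp
  | @insert j s hj ih =>
      rw [Finset.sup_insert]
      have heq : (fun a => (insert j s).sup (fun i => f i a))
          = fun a => f j a ⊔ s.sup (fun i => f i a) := by
        funext a
        rw [Finset.sup_insert]
      rw [heq, limsup_max]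
      exact sup_le_sup le_rfl ih

lemma cover (hpos : ∀ a, 0 < t a) (hSub : ∀ a, μ a Set.univ ≤ 1)
    (hto0 : Tendsto t atTop (𝓝 0))
    {L : ℝ → ℝ} {G : Set ℝ} (hGopen : IsOpen G)
    (hconvG : ∀ l ∈ G, Tendsto (Ef μ t l) atTop (𝓝 (ENNReal.ofReal (Real.exp (L l)))))
    (hLam : ∀ l ∈ G, LambdaBar μ t (hlin l) = ((L l : ℝ) : EReal))
    (hranF : ∀ x : ℝ, FF0 μ t x ≠ 0 → FF1 μ t x < lim0 μ t univ → x ∈ ranLR L G)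
    {K : Set ℝ} (hK : IsCompact K) :
    lim0 μ t K ≤ ⨆ x ∈ K, FF1 μ t x := by
  rcases K.eq_empty_or_nonempty with rfl | hKne
  · have hz : (fun a => μ a (∅ : Set ℝ) ^ t a) = fun _ => (0 : ℝ≥0∞) :=
      funext fun a => by simp [ENNReal.zero_rpow_of_pos (hpos a)]
    unfold lim0
    rw [hz, limsup_const]
    simp
  set R := ⨆ x ∈ K, FF1 μ t x with hR
  have hRle1 : R ≤ 1 := iSup₂_le fun x _ => FF1_le_one hpos hSub x
  have hRtop : R ≠ ⊤ := ne_top_of_le_ne_top ENNReal.one_ne_top hRle1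
  have key : ∀ ε : ℝ≥0, 0 < ε → lim0 μ t K ≤ R + ε := by
    intro ε hε
    have hchoice : ∀ x ∈ K, ∃ H, IsOpen H ∧ x ∈ H ∧ lim0 μ t H ≤ R + ε := by
      intro x hx
      by_cases h0 : FF0 μ t x = 0
      · have hlt : FF0 μ t x < (ε : ℝ≥0∞) := by
          rw [h0]
          exact_mod_cast ENNReal.coe_pos.mpr hε
        obtain ⟨H, hHo, hxH, hH⟩ := FF0_lt_iff.mp hlt
        exact ⟨H, hHo, hxH, hH.le.trans le_add_self⟩
      · by_cases h1 : lim0 μ t univ ≤ FF1 μ t x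
        · refine ⟨univ, isOpen_univ, mem_univ x, ?_⟩
          have hF1R : FF1 μ t x ≤ R := le_iSup₂ (f := fun y (_ : y ∈ K) => FF1 μ t y) x hx
          exact le_trans h1 (hF1R.trans le_self_add)
        · push_neg at h1
          obtain ⟨l, hlG, heq0, heq1⟩ := pinch hpos hSub hto0 hGopen hconvG hLam (hranF x h0 h1)
          have hne : FF0 μ t x ≠ ⊤ :=
            ne_top_of_le_ne_top ENNReal.one_ne_top (FF0_le_one hpos hSub x)
          have hlt : FF0 μ t x < FF0 μ t x + ε :=
            ENNReal.lt_add_right hne (by exact_mod_cast hε.ne')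
          obtain ⟨H, hHo, hxH, hH⟩ := FF0_lt_iff.mp hlt
          refine ⟨H, hHo, hxH, ?_⟩
          have h01 : FF0 μ t x ≤ FF1 μ t x := by rw [heq0, heq1]
          have hF1R : FF1 μ t x ≤ R := le_iSup₂ (f := fun y (_ : y ∈ K) => FF1 μ t y) x hx
          calc lim0 μ t H ≤ FF0 μ t x + ε := hH.le
            _ ≤ R + ε := add_le_add_left (h01.trans hF1R) _
    choose! Hf hHfo hxHf hHfb using hchoice
    have hcov : K ⊆ ⋃ x ∈ K, Hf x := fun x hx => mem_biUnion hx (hxHf x hx)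
    obtain ⟨b', hb'sub, hb'fin, hb'cov⟩ := hK.elim_finite_subcover_image hHfo hcov
    classical
    set s : Finset ℝ := hb'fin.toFinset with hsdef
    have hscov : K ⊆ ⋃ i ∈ s, Hf i := by
      intro y hy
      obtain ⟨i, hib, hyi⟩ := mem_iUnion₂.mp (hb'cov hy)
      exact mem_biUnion (hb'fin.mem_toFinset.mpr hib) hyi
    have hsne : s.Nonempty := by
      obtain ⟨x0, hx0⟩ := hKne
      obtain ⟨i, hi, _⟩ := mem_iUnion₂.mp (hscov hx0)
      exact ⟨i, hi⟩
    have hcard1 : 1 ≤ (s.card : ℝ) := by exact_mod_cast Finset.card_pos.mpr hsne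
    have hptw : ∀ a, μ a K ^ (t a)
        ≤ (s.card : ℝ≥0∞) ^ (t a) * s.sup (fun i => μ a (Hf i) ^ (t a)) := by
      intro a
      have hm1 : μ a K ≤ (s.card : ℝ≥0∞) * s.sup (fun i => μ a (Hf i)) := by
        calc μ a K ≤ μ a (⋃ i ∈ s, Hf i) := measure_mono hscov
          _ ≤ ∑ i ∈ s, μ a (Hf i) := measure_biUnion_finset_le _ _
          _ ≤ s.card • s.sup (fun i => μ a (Hf i)) :=
              Finset.sum_le_card_nsmul _ _ _ (fun i hi => Finset.le_sup (f := fun i => μ a (Hf i)) hi)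
          _ = (s.card : ℝ≥0∞) * s.sup (fun i => μ a (Hf i)) := nsmul_eq_mul _ _
      calc μ a K ^ (t a)
          ≤ ((s.card : ℝ≥0∞) * s.sup (fun i => μ a (Hf i))) ^ (t a) :=
            ENNReal.rpow_le_rpow hm1 (hpos a).le
        _ = (s.card : ℝ≥0∞) ^ (t a) * (s.sup (fun i => μ a (Hf i))) ^ (t a) :=
            ENNReal.mul_rpow_of_nonneg _ _ (hpos a).le
        _ = (s.card : ℝ≥0∞) ^ (t a) * s.sup (fun i => μ a (Hf i) ^ (t a)) := by
            congr 1
            exact Finset.comp_sup_eq_sup_comp (fun z : ℝ≥0∞ => z ^ (t a))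
              (fun u v => (rpow_monotone (t a) (hpos a).le).map_max)
              (by simp [ENNReal.zero_rpow_of_pos (hpos a)])
    have key2 : ∀ ε' : ℝ, 0 < ε' → lim0 μ t K ≤ ENNReal.ofReal (Real.exp ε') * (R + ε) := by
      intro ε' hε'
      have hev := rpow_base_eventually_le hpos hto0 (n := (s.card : ℝ)) hcard1 hε'
      have hcast : (ENNReal.ofReal ((s.card : ℝ))) = (s.card : ℝ≥0∞) := ENNReal.ofReal_natCast _
      have hev2 : ∀ᶠ a in atTop, μ a K ^ t a
          ≤ ENNReal.ofReal (Real.exp ε') * s.sup (fun i => μ a (Hf i) ^ (t a)) := by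
        filter_upwards [hev] with a ha
        refine (hptw a).trans (mul_le_mul' ?_ le_rfl)
        rwa [hcast] at ha
      calc lim0 μ t K
          ≤ limsup (fun a => ENNReal.ofReal (Real.exp ε')
              * s.sup (fun i => μ a (Hf i) ^ (t a))) atTop := limsup_le_limsup hev2
        _ = ENNReal.ofReal (Real.exp ε')
              * limsup (fun a => s.sup (fun i => μ a (Hf i) ^ (t a))) atTop :=
            limsup_const_mul _ (by positivity) ENNReal.ofReal_ne_top
        _ ≤ ENNReal.ofReal (Real.exp ε') * (s.sup fun i => lim0 μ t (Hf i)) :=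
            mul_le_mul_right (limsup_finsetSup_le s _) _
        _ ≤ ENNReal.ofReal (Real.exp ε') * (R + ε) := by
            refine mul_le_mul_right (Finset.sup_le fun i hi => ?_) _
            exact hHfb i (hb'sub (hb'fin.mem_toFinset.mp hi))
    have hRe_top : R + (ε : ℝ≥0∞) ≠ ⊤ := ENNReal.add_ne_top.mpr ⟨hRtop, ENNReal.coe_ne_top⟩
    have htend : Tendsto (fun m : ℕ => ENNReal.ofReal (Real.exp (1 / ((m : ℝ) + 1))) * (R + ε))
        atTop (𝓝 (R + ε)) := by
      have h0 : Tendsto (fun m : ℕ => ENNReal.ofReal (Real.exp (1 / ((m : ℝ) + 1)))) atTop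
          (𝓝 1) := by
        have h2 := (ENNReal.continuous_ofReal.tendsto _).comp
          ((Real.continuous_exp.tendsto _).comp tendsto_one_div_add_atTop_nhds_zero_nat)
        simpa [Function.comp_def] using h2
      have := ENNReal.Tendsto.mul_const h0 (Or.inr hRe_top)
      simpa using this
    exact ge_of_tendsto htend (Eventually.of_forall fun m => key2 (1 / ((m:ℝ)+1)) (by positivity))
  exact ENNReal.le_of_forall_pos_le_add fun ε hε _ => key ε hε

end LDPAux
end Part7

section Part8
namespace LDPAux

variable {A : Type*} [Preorder A] [IsDirected A (· ≤ ·)] [Nonempty A]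
variable {μ : A → Measure ℝ} {t : A → ℝ}

lemma chebClosed (hpos : ∀ a, 0 < t a) {L : ℝ → ℝ} {l : ℝ}
    (hL : LambdaBar μ t (hlin l) = ((L l : ℝ) : EReal)) {s : Set ℝ} (hs : MeasurableSet s)
    {b : ℝ} (hb : ∀ y ∈ s, b ≤ l * y) :
    lim0 μ t s ≤ ENNReal.ofReal (Real.exp (L l - b)) := by
  have h := chebSet (μ := μ) hpos hs hb
  rw [limsup_Ef_eq hL] at h
  have h2 := le_inv_mul_of_mul_le (by positivity) ENNReal.ofReal_ne_top h
  rwa [ofReal_exp_inv_mul] at h2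

lemma tails (hpos : ∀ a, 0 < t a) {L : ℝ → ℝ} {G : Set ℝ} (hGopen : IsOpen G)
    (hLam : ∀ l ∈ G, LambdaBar μ t (hlin l) = ((L l : ℝ) : EReal)) (h0G : (0 : ℝ) ∈ G) :
    ∀ ε : ℝ, 0 < ε → ∃ M : ℝ, 0 < M ∧ lim0 μ t (Ici M) ≤ ENNReal.ofReal ε
      ∧ lim0 μ t (Iic (-M)) ≤ ENNReal.ofReal ε := by
  intro ε hε
  obtain ⟨r, hr, hball⟩ := Metric.isOpen_iff.mp hGopen 0 h0G
  set lp : ℝ := r / 2 with hlp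
  set lm : ℝ := -(r / 2) with hlm
  have hr2 : (0:ℝ) < r / 2 := by positivity
  have hlpG : lp ∈ G := hball (by
    simp only [Metric.mem_ball, Real.dist_eq, sub_zero, hlp]
    rw [abs_of_pos hr2]
    linarith)
  have hlmG : lm ∈ G := hball (by
    simp only [Metric.mem_ball, Real.dist_eq, sub_zero, hlm]
    rw [abs_of_neg (by linarith : -(r/2) < 0)]
    linarith)
  have hlppos : 0 < lp := by positivity
  set M : ℝ := max 1 (max ((L lp - Real.log ε) / lp) ((L lm - Real.log ε) / (-lm))) with hM
  refine ⟨M, lt_of_lt_of_le one_pos (le_max_left _ _), ?_, ?_⟩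
  · have hMb : (L lp - Real.log ε) / lp ≤ M := le_trans (le_max_left _ _) (le_max_right _ _)
    have hexp : L lp - lp * M ≤ Real.log ε := by
      rw [div_le_iff₀ hlppos] at hMb
      nlinarith
    have := chebClosed (μ := μ) hpos (hLam lp hlpG) measurableSet_Ici
      (b := lp * M) (fun y hy => mul_le_mul_of_nonneg_left hy hlppos.le)
    refine this.trans (ENNReal.ofReal_le_ofReal ?_)
    calc Real.exp (L lp - lp * M) ≤ Real.exp (Real.log ε) := Real.exp_le_exp.mpr hexp
      _ = ε := Real.exp_log hε
  · have hlmneg : lm < 0 := by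
      rw [hlm]
      have : (0:ℝ) < r/2 := by positivity
      linarith
    have hMb : (L lm - Real.log ε) / (-lm) ≤ M := le_trans (le_max_right _ _) (le_max_right _ _)
    have hexp : L lm - lm * (-M) ≤ Real.log ε := by
      rw [div_le_iff₀ (by linarith : (0:ℝ) < -lm)] at hMb
      nlinarith
    have := chebClosed (μ := μ) hpos (hLam lm hlmG) measurableSet_Iic
      (b := lm * (-M)) (fun y hy => by
        have h' : y ≤ -M := hy
        nlinarith [hlmneg])
    refine this.trans (ENNReal.ofReal_le_ofReal ?_)
    calc Real.exp (L lm - lm * (-M)) ≤ Real.exp (Real.log ε) := Real.exp_le_exp.mpr hexp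
      _ = ε := Real.exp_log hε

lemma closedBound (hpos : ∀ a, 0 < t a) (hSub : ∀ a, μ a Set.univ ≤ 1)
    (hto0 : Tendsto t atTop (𝓝 0))
    {L : ℝ → ℝ} {G : Set ℝ} (hGopen : IsOpen G)
    (hconvG : ∀ l ∈ G, Tendsto (Ef μ t l) atTop (𝓝 (ENNReal.ofReal (Real.exp (L l)))))
    (hLam : ∀ l ∈ G, LambdaBar μ t (hlin l) = ((L l : ℝ) : EReal))
    (hranF : ∀ x : ℝ, FF0 μ t x ≠ 0 → FF1 μ t x < lim0 μ t univ → x ∈ ranLR L G)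
    (h0G : (0 : ℝ) ∈ G) {F : Set ℝ} (hF : IsClosed F) :
    lim0 μ t F ≤ ⨆ x ∈ F, FF1 μ t x := by
  set R := ⨆ x ∈ F, FF1 μ t x with hR
  have hRle1 : R ≤ 1 := iSup₂_le fun x _ => FF1_le_one hpos hSub x
  have hRtop : R ≠ ⊤ := ne_top_of_le_ne_top ENNReal.one_ne_top hRle1
  have key : ∀ ε : ℝ≥0, 0 < ε → lim0 μ t F ≤ R + ε := by
    intro ε hε
    obtain ⟨M, hM, hIci, hIic⟩ := tails (μ := μ) hpos hGopen hLam h0G (ε : ℝ)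
      (by exact_mod_cast hε)
    rw [ENNReal.ofReal_coe_nnreal] at hIci hIic
    have hcpt : IsCompact (F ∩ Icc (-M) M) := isCompact_Icc.inter_left hF
    have hmid : lim0 μ t (F ∩ Icc (-M) M) ≤ R := by
      refine (cover hpos hSub hto0 hGopen hconvG hLam hranF hcpt).trans ?_
      exact iSup₂_le fun x hx => le_iSup₂ (f := fun y (_ : y ∈ F) => FF1 μ t y) x hx.1
    have hptw : ∀ a, μ a F ^ (t a) ≤ (3 : ℝ≥0∞) ^ (t a) *
        max (μ a (F ∩ Icc (-M) M) ^ (t a)) (max (μ a (Iic (-M)) ^ (t a)) (μ a (Ici M) ^ (t a))) := by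
      intro a
      have hsub : F ⊆ (F ∩ Icc (-M) M) ∪ (Iic (-M) ∪ Ici M) := by
        intro y hy
        rcases le_or_gt y (-M) with h | h
        · exact Or.inr (Or.inl h)
        · rcases le_or_gt y M with h2 | h2
          · exact Or.inl ⟨hy, ⟨h.le, h2⟩⟩
          · exact Or.inr (Or.inr h2.le)
      have hm : μ a F ≤ μ a (F ∩ Icc (-M) M) + (μ a (Iic (-M)) + μ a (Ici M)) := by
        calc μ a F ≤ μ a ((F ∩ Icc (-M) M) ∪ (Iic (-M) ∪ Ici M)) := measure_mono hsub
          _ ≤ μ a (F ∩ Icc (-M) M) + μ a (Iic (-M) ∪ Ici M) := measure_union_le _ _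
          _ ≤ _ := add_le_add_right (measure_union_le _ _) _
      have hm2 : μ a F ≤ 3 * max (μ a (F ∩ Icc (-M) M)) (max (μ a (Iic (-M))) (μ a (Ici M))) :=
        hm.trans (sum3_le_max _ _ _ _ (le_max_left _ _)
          (le_max_of_le_right (le_max_left _ _)) (le_max_of_le_right (le_max_right _ _)))
      calc μ a F ^ (t a) ≤ (3 * max (μ a (F ∩ Icc (-M) M))
            (max (μ a (Iic (-M))) (μ a (Ici M)))) ^ (t a) :=
            ENNReal.rpow_le_rpow hm2 (hpos a).le
        _ = (3 : ℝ≥0∞) ^ (t a) * (max (μ a (F ∩ Icc (-M) M))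
            (max (μ a (Iic (-M))) (μ a (Ici M)))) ^ (t a) :=
            ENNReal.mul_rpow_of_nonneg _ _ (hpos a).le
        _ = _ := by
            rw [(rpow_monotone (t a) (hpos a).le).map_max,
              (rpow_monotone (t a) (hpos a).le).map_max]
    have key2 : ∀ ε' : ℝ, 0 < ε' → lim0 μ t F ≤ ENNReal.ofReal (Real.exp ε') * (R + ε) := by
      intro ε' hε'
      have h3 : ((3 : ℝ≥0∞)) = ENNReal.ofReal (3 : ℝ) := by norm_num
      have hev : ∀ᶠ a in atTop, (3 : ℝ≥0∞) ^ (t a) ≤ ENNReal.ofReal (Real.exp ε') := by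
        rw [h3]
        exact rpow_base_eventually_le hpos hto0 (by norm_num) hε'
      have hev2 : ∀ᶠ a in atTop, μ a F ^ (t a) ≤ ENNReal.ofReal (Real.exp ε') *
          max (μ a (F ∩ Icc (-M) M) ^ (t a))
            (max (μ a (Iic (-M)) ^ (t a)) (μ a (Ici M) ^ (t a))) := by
        filter_upwards [hev] with a ha
        exact (hptw a).trans (mul_le_mul' ha le_rfl)
      calc lim0 μ t F
          ≤ limsup (fun a => ENNReal.ofReal (Real.exp ε') *
              max (μ a (F ∩ Icc (-M) M) ^ (t a))
                (max (μ a (Iic (-M)) ^ (t a)) (μ a (Ici M) ^ (t a)))) atTop :=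
            limsup_le_limsup hev2
        _ = ENNReal.ofReal (Real.exp ε') * limsup (fun a =>
              max (μ a (F ∩ Icc (-M) M) ^ (t a))
                (max (μ a (Iic (-M)) ^ (t a)) (μ a (Ici M) ^ (t a)))) atTop :=
            limsup_const_mul _ (by positivity) ENNReal.ofReal_ne_top
        _ ≤ ENNReal.ofReal (Real.exp ε') * (R + ε) := by
            refine mul_le_mul_right ?_ _
            rw [limsup_max, limsup_max]
            refine max_le (hmid.trans le_self_add) (max_le ?_ ?_)
            · exact le_trans hIic le_add_self
            · exact le_trans hIci le_add_self
    have hRe_top : R + (ε : ℝ≥0∞) ≠ ⊤ := ENNReal.add_ne_top.mpr ⟨hRtop, ENNReal.coe_ne_top⟩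
    have htend : Tendsto (fun m : ℕ => ENNReal.ofReal (Real.exp (1 / ((m : ℝ) + 1))) * (R + ε))
        atTop (𝓝 (R + ε)) := by
      have h0 : Tendsto (fun m : ℕ => ENNReal.ofReal (Real.exp (1 / ((m : ℝ) + 1)))) atTop
          (𝓝 1) := by
        have h2 := (ENNReal.continuous_ofReal.tendsto _).comp
          ((Real.continuous_exp.tendsto _).comp tendsto_one_div_add_atTop_nhds_zero_nat)
        simpa [Function.comp_def] using h2
      have := ENNReal.Tendsto.mul_const h0 (Or.inr hRe_top)
      simpa using this
    exact ge_of_tendsto htend (Eventually.of_forall fun m => key2 (1 / ((m : ℝ) + 1)) (by positivity))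
  exact ENNReal.le_of_forall_pos_le_add fun ε hε _ => key ε hε

end LDPAux
end Part8

section Part9
namespace LDPAux

variable {A : Type*} [Preorder A] [IsDirected A (· ≤ ·)] [Nonempty A]
variable {μ : A → Measure ℝ} {t : A → ℝ}

/-- The candidate rate function. -/
def JJ (μ : A → Measure ℝ) (t : A → ℝ) : ℝ → ℝ≥0∞ := fun x => negLog (FF1 μ t x)

lemma exp_neg_JJ (hpos : ∀ a, 0 < t a) (hSub : ∀ a, μ a Set.univ ≤ 1) (x : ℝ) :
    EReal.exp (-((JJ μ t x : ℝ≥0∞) : EReal)) = FF1 μ t x :=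
  exp_neg_negLog (FF1_le_one hpos hSub x)

lemma JJ_lsc (hpos : ∀ a, 0 < t a) (hSub : ∀ a, μ a Set.univ ≤ 1) :
    LowerSemicontinuous (JJ μ t) := by
  intro x c hc
  have h1 : FF1 μ t x < EReal.exp (-(c : EReal)) :=
    (lt_negLog_iff (FF1_le_one hpos hSub x)).mp hc
  obtain ⟨H, hHo, hxH, hH⟩ := FF1_lt_iff.mp h1
  filter_upwards [hHo.mem_nhds hxH] with y hy
  exact (lt_negLog_iff (FF1_le_one hpos hSub y)).mpr (lt_of_le_of_lt (FF1_le hHo hy) hH)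

lemma claims (hpos : ∀ a, 0 < t a) (hSub : ∀ a, μ a Set.univ ≤ 1)
    {L : ℝ → ℝ} {G : Set ℝ} {S : Set (ℝ → EReal)}
    (hScont : ∀ h ∈ S, Continuous h) (hStop : ∀ h ∈ S, ∀ y, h y ≠ ⊤)
    (hSlin : ∀ l ∈ G, hlin l ∈ S) (hSex : ∀ h ∈ S, LambdaExists μ t h)
    (hLam : ∀ l ∈ G, LambdaBar μ t (hlin l) = ((L l : ℝ) : EReal))
    {x l : ℝ} (hlG : l ∈ G)
    (heq0 : FF0 μ t x = ENNReal.ofReal (Real.exp (L l - l * x)))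
    (heq1 : FF1 μ t x = ENNReal.ofReal (Real.exp (L l - l * x))) :
    ((JJ μ t x : ℝ≥0∞) : EReal) = LegG L G x
      ∧ ((JJ μ t x : ℝ≥0∞) : EReal) = LamStar μ t S x := by
  have hval : ((JJ μ t x : ℝ≥0∞) : EReal) = ((l * x - L l : ℝ) : EReal) := by
    show ((negLog (FF1 μ t x) : ℝ≥0∞) : EReal) = _
    rw [negLog_coe (FF1_le_one hpos hSub x), heq1,
      ENNReal.log_ofReal_of_pos (Real.exp_pos _), Real.log_exp, ← EReal.coe_neg]
    norm_num
  constructor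
  · rw [hval]
    refine le_antisymm ?_ (iSup₂_le fun l' hl' => ?_)
    · exact le_iSup₂ (f := fun l' (_ : l' ∈ G) => ((l' * x - L l' : ℝ) : EReal)) l hlG
    · have hch' := cheb hpos (hLam l' hl') x
      rw [heq0] at hch'
      have h2 : Real.exp (L l - l * x) ≤ Real.exp (L l' - l' * x) :=
        (ENNReal.ofReal_le_ofReal_iff (Real.exp_pos _).le).mp hch'
      have h3 : l' * x - L l' ≤ l * x - L l := by
        have := Real.exp_le_exp.mp h2
        linarith
      exact_mod_cast h3
  · rw [hval]
    refine le_antisymm ?_ (iSup₂_le fun h hh => ?_)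
    · refine le_iSup₂_of_le (hlin l) (hSlin l hlG) ?_
      rw [show hlin l x = ((l * x : ℝ) : EReal) from rfl, hLam l hlG, ← EReal.coe_sub]
    · have hvar := varad hpos hSub (hScont h hh) (hStop h hh) x
      have hWeq : liminf (expPow μ t h) atTop = limsup (expPow μ t h) atTop :=
        ENNReal.log_injective (hSex h hh)
      rw [hWeq] at hvar
      rcases eq_or_ne (h x) ⊥ with hbot | hne
      · rw [hbot, EReal.bot_sub]
        exact bot_le
      · obtain ⟨r, hr⟩ : ∃ r : ℝ, h x = (r : EReal) :=
          ⟨(h x).toReal, (EReal.coe_toReal (hStop h hh x) hne).symm⟩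
      -- take logs
        have hlog : ((r + (L l - l * x) : ℝ) : EReal) ≤ LambdaBar μ t h := by
          have hmono := ENNReal.log_monotone hvar
          have hLHS : ENNReal.log (EReal.exp (h x) * FF1 μ t x)
              = ((r + (L l - l * x) : ℝ) : EReal) := by
            rw [hr, heq1, EReal.exp_coe, ofReal_exp_mul_exp,
              ENNReal.log_ofReal_of_pos (Real.exp_pos _), Real.log_exp]
          rw [hLHS] at hmono
          exact hmono
        set Lam := LambdaBar μ t h with hLamdef
        rcases eq_or_ne Lam ⊤ with hT | hT
        · rw [hr, hT, EReal.sub_top]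
          exact bot_le
        · have hB : Lam ≠ ⊥ := by
            intro hB
            rw [hB, le_bot_iff] at hlog
            exact EReal.coe_ne_bot _ hlog
          obtain ⟨c, hc⟩ : ∃ c : ℝ, Lam = (c : EReal) := ⟨Lam.toReal, (EReal.coe_toReal hT hB).symm⟩
          rw [hr, hc, ← EReal.coe_sub]
          have h4 : r + (L l - l * x) ≤ c := by
            rw [hc] at hlog
            exact_mod_cast hlog
          exact_mod_cast (by linarith : r - c ≤ l * x - L l)

end LDPAux
end Part9

/-- Theorem (open problem), part (a). -/
theorem statement5
    {A : Type*} [Preorder A] [IsDirected A (· ≤ ·)] [Nonempty A]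
    (μ : A → Measure ℝ) (t : A → ℝ)
    (hRadon : ∀ a, (μ a).InnerRegular) (hSub : ∀ a, μ a Set.univ ≤ 1)
    (hpos : ∀ a, 0 < t a) (hto0 : Tendsto t atTop (𝓝 (0 : ℝ)))
    (G : Set ℝ) (hGopen : IsOpen G) (hGint : G.OrdConnected) (hGne : G.Nonempty)
    (S : Set (ℝ → EReal)) (hScont : ∀ h ∈ S, Continuous h) (hStop : ∀ h ∈ S, ∀ x, h x ≠ ⊤)
    (hSlin : ∀ l ∈ G, hlin l ∈ S)
    (hSex : ∀ h ∈ S, LambdaExists μ t h)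
    (L : ℝ → ℝ) (hL : ∀ l ∈ G, LambdaBar μ t (hlin l) = ((L l : ℝ) : EReal))
    (hran : {x : ℝ | lZero μ t x ≠ ⊤} ∩
        {x : ℝ | - LambdaBar μ t (fun _ => (0 : EReal)) < lOne μ t x} ⊆ ranLR L G) :
    ∃ J : ℝ → ℝ≥0∞, VagueLDP μ t J ∧
      (∀ x : ℝ, J x ≠ ⊤ → - LambdaBar μ t (fun _ => (0 : EReal)) < (J x : EReal) →
        ((J x : EReal) = LegG L G x ∧ (J x : EReal) = LamStar μ t S x)) ∧
      ((0 : ℝ) ∈ G → NarrowLDP μ t J ∧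
        ∀ x : ℝ, J x ≠ ⊤ →
          ((J x : EReal) = LegG L G x ∧ (J x : EReal) = LamStar μ t S x)) := by
  classical
  have hconvG : ∀ l ∈ G, Tendsto (LDPAux.Ef μ t l) atTop
      (𝓝 (ENNReal.ofReal (Real.exp (L l)))) :=
    fun l hl => LDPAux.conv (hSex _ (hSlin l hl)) (hL l hl)
  have hranF : ∀ x : ℝ, LDPAux.FF0 μ t x ≠ 0 →
      LDPAux.FF1 μ t x < LDPAux.lim0 μ t Set.univ → x ∈ ranLR L G := by
    intro x h0 h1
    apply hran
    constructor
    · show lZero μ t x ≠ ⊤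
      rw [LDPAux.lZero_eq]
      intro hT
      rw [EReal.neg_eq_top_iff, ENNReal.log_eq_bot_iff] at hT
      exact h0 hT
    · show - LambdaBar μ t (fun _ => (0 : EReal)) < lOne μ t x
      rw [LDPAux.lambdaBar_zero_eq, LDPAux.lOne_eq]
      exact EReal.neg_lt_neg_iff.mpr (ENNReal.log_lt_log_iff.mpr h1)
  have hclaims : ∀ x : ℝ, LDPAux.JJ μ t x ≠ ⊤ →
      LDPAux.FF1 μ t x < LDPAux.lim0 μ t Set.univ →
      (((LDPAux.JJ μ t x : ℝ≥0∞) : EReal) = LegG L G x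
        ∧ ((LDPAux.JJ μ t x : ℝ≥0∞) : EReal) = LamStar μ t S x) := by
    intro x hJ h1
    have hF1ne : LDPAux.FF1 μ t x ≠ 0 := fun h => hJ (LDPAux.negLog_eq_top_iff.mpr h)
    have hF0ne : LDPAux.FF0 μ t x ≠ 0 := by
      intro h
      apply hF1ne
      have h2 := LDPAux.FF1_le_FF0 hpos hSub x
      rw [h] at h2
      exact le_zero_iff.mp h2
    obtain ⟨l, hlG, heq0, heq1⟩ :=
      LDPAux.pinch hpos hSub hto0 hGopen hconvG hL (hranF x hF0ne h1)
    exact LDPAux.claims hpos hSub hScont hStop hSlin hSex hL hlG heq0 heq1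
  have hcond : ∀ x : ℝ,
      - LambdaBar μ t (fun _ => (0 : EReal)) < ((LDPAux.JJ μ t x : ℝ≥0∞) : EReal) →
      LDPAux.FF1 μ t x < LDPAux.lim0 μ t Set.univ := by
    intro x hx
    rw [LDPAux.lambdaBar_zero_eq] at hx
    have hx2 : - ENNReal.log (LDPAux.lim0 μ t Set.univ)
        < - ENNReal.log (LDPAux.FF1 μ t x) := by
      rw [show LDPAux.JJ μ t x = LDPAux.negLog (LDPAux.FF1 μ t x) from rfl] at hx
      rwa [LDPAux.negLog_coe (LDPAux.FF1_le_one hpos hSub x)] at hx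
    exact ENNReal.log_lt_log_iff.mp (EReal.neg_lt_neg_iff.mp hx2)
  have hlower : ∀ G' : Set ℝ, IsOpen G' →
      (⨆ x ∈ G', EReal.exp (-((LDPAux.JJ μ t x : ℝ≥0∞) : EReal)))
        ≤ liminf (fun a => μ a G' ^ (t a)) atTop := by
    intro G' hG'
    have hsup : (⨆ x ∈ G', EReal.exp (-((LDPAux.JJ μ t x : ℝ≥0∞) : EReal)))
        = ⨆ x ∈ G', LDPAux.FF1 μ t x :=
      iSup_congr fun x => iSup_congr fun _ => LDPAux.exp_neg_JJ hpos hSub x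
    rw [hsup]
    exact iSup₂_le fun x hx => LDPAux.FF1_le hG' hx
  refine ⟨LDPAux.JJ μ t, ⟨LDPAux.JJ_lsc hpos hSub, ?_, hlower⟩, ?_, ?_⟩
  · intro K hK
    have hsup : (⨆ x ∈ K, EReal.exp (-((LDPAux.JJ μ t x : ℝ≥0∞) : EReal)))
        = ⨆ x ∈ K, LDPAux.FF1 μ t x :=
      iSup_congr fun x => iSup_congr fun _ => LDPAux.exp_neg_JJ hpos hSub x
    rw [hsup]
    exact LDPAux.cover hpos hSub hto0 hGopen hconvG hL hranF hK
  · intro x hJ hlt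
    exact hclaims x hJ (hcond x hlt)
  · intro h0G
    have hc0 : LDPAux.lim0 μ t Set.univ = ENNReal.ofReal (Real.exp (L 0)) := by
      have h1 : LDPAux.lim0 μ t Set.univ = limsup (LDPAux.Ef μ t 0) atTop := by
        unfold LDPAux.lim0
        rw [LDPAux.Ef_zero]
      rw [h1, LDPAux.limsup_Ef_eq (hL 0 h0G)]
    constructor
    · refine ⟨LDPAux.JJ_lsc hpos hSub, ?_, hlower⟩
      intro F hF
      have hsup : (⨆ x ∈ F, EReal.exp (-((LDPAux.JJ μ t x : ℝ≥0∞) : EReal)))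
          = ⨆ x ∈ F, LDPAux.FF1 μ t x :=
        iSup_congr fun x => iSup_congr fun _ => LDPAux.exp_neg_JJ hpos hSub x
      rw [hsup]
      exact LDPAux.closedBound hpos hSub hto0 hGopen hconvG hL hranF h0G hF
    · intro x hJ
      by_cases hcase : LDPAux.FF1 μ t x < LDPAux.lim0 μ t Set.univ
      · exact hclaims x hJ (hcase)
      · push_neg at hcase
        have hch := LDPAux.cheb hpos (hL 0 h0G) x
        rw [zero_mul, sub_zero] at hch
        have heq1 : LDPAux.FF1 μ t x = ENNReal.ofReal (Real.exp (L 0 - 0 * x)) := by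
          rw [zero_mul, sub_zero]
          refine le_antisymm ((LDPAux.FF1_le_FF0 hpos hSub x).trans hch) ?_
          rw [← hc0]
          exact hcase
        have heq0 : LDPAux.FF0 μ t x = ENNReal.ofReal (Real.exp (L 0 - 0 * x)) := by
          rw [zero_mul, sub_zero]
          refine le_antisymm hch ?_
          rw [← hc0]
          exact hcase.trans (LDPAux.FF1_le_FF0 hpos hSub x)
        exact LDPAux.claims hpos hSub hScont hStop hSlin hSex hL h0G heq0 heq1

end
end

section
/- Let X be a locally compact Hausdorff space. Then (μ_α) satisfies a vague large deviation principle with powers (t_α) if and only if l_0 = l_1; in that case the principle holds with rate function l_0. -/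
open Filter MeasureTheory Topology Set
open scoped ENNReal NNReal

noncomputable section

variable {X : Type*} [TopologicalSpace X] [MeasurableSpace X]
variable {A : Type*} [Preorder A]

namespace Statement15Aux

/-- `inf { limsup_α μ_α(G)^{t_α} : G open, x ∈ G }`. -/
noncomputable def vsup (μ : A → Measure X) (t : A → ℝ) (x : X) : ℝ≥0∞ :=
  ⨅ (G : Set X) (_ : IsOpen G) (_ : x ∈ G),
      Filter.limsup (fun a => μ a G ^ (t a)) Filter.atTop

/-- `inf { liminf_α μ_α(G)^{t_α} : G open, x ∈ G }`. -/
noncomputable def vinf (μ : A → Measure X) (t : A → ℝ) (x : X) : ℝ≥0∞ :=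
  ⨅ (G : Set X) (_ : IsOpen G) (_ : x ∈ G),
      Filter.liminf (fun a => μ a G ^ (t a)) Filter.atTop

lemma lZero_eq (μ : A → Measure X) (t : A → ℝ) (x : X) :
    lZero μ t x = - ENNReal.log (vsup μ t x) := rfl

lemma lOne_eq (μ : A → Measure X) (t : A → ℝ) (x : X) :
    lOne μ t x = - ENNReal.log (vinf μ t x) := rfl

lemma vsup_le_limsup (μ : A → Measure X) (t : A → ℝ) {G : Set X} {y : X}
    (hG : IsOpen G) (hy : y ∈ G) :
    vsup μ t y ≤ Filter.limsup (fun a => μ a G ^ (t a)) Filter.atTop :=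
  iInf_le_of_le G (iInf_le_of_le hG (iInf_le _ hy))

lemma vinf_le_liminf (μ : A → Measure X) (t : A → ℝ) {G : Set X} {y : X}
    (hG : IsOpen G) (hy : y ∈ G) :
    vinf μ t y ≤ Filter.liminf (fun a => μ a G ^ (t a)) Filter.atTop :=
  iInf_le_of_le G (iInf_le_of_le hG (iInf_le _ hy))

lemma limsup_le_one (μ : A → Measure X) (t : A → ℝ)
    (hSub : ∀ a, μ a Set.univ ≤ 1) (hpos : ∀ a, 0 < t a) (S : Set X) :
    Filter.limsup (fun a => μ a S ^ (t a)) Filter.atTop ≤ 1 := by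
  refine Filter.limsup_le_of_le (by isBoundedDefault) ?_
  exact Filter.Eventually.of_forall fun a =>
    ENNReal.rpow_le_one ((measure_mono (Set.subset_univ S)).trans (hSub a)) (hpos a).le

lemma vsup_le_one (μ : A → Measure X) (t : A → ℝ)
    (hSub : ∀ a, μ a Set.univ ≤ 1) (hpos : ∀ a, 0 < t a) (x : X) :
    vsup μ t x ≤ 1 :=
  (vsup_le_limsup μ t isOpen_univ (Set.mem_univ x)).trans (limsup_le_one μ t hSub hpos _)

lemma exists_open_vsup_lt (μ : A → Measure X) (t : A → ℝ) {x : X} {w : ℝ≥0∞}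
    (h : vsup μ t x < w) :
    ∃ G : Set X, IsOpen G ∧ x ∈ G ∧ ∀ y ∈ G, vsup μ t y < w := by
  simp only [vsup, iInf_lt_iff] at h
  obtain ⟨G, hG, hxG, hlt⟩ := h
  exact ⟨G, hG, hxG, fun y hy => lt_of_le_of_lt (vsup_le_limsup μ t hG hy) hlt⟩

lemma limsup_compact_le [IsDirected A (· ≤ ·)] [Nonempty A]
    (μ : A → Measure X) (t : A → ℝ) (hpos : ∀ a, 0 < t a)
    (hto0 : Tendsto t atTop (𝓝 (0 : ℝ))) {K : Set X} (hK : IsCompact K) :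
    Filter.limsup (fun a => μ a K ^ (t a)) Filter.atTop ≤ ⨆ x ∈ K, vsup μ t x := by
  haveI : (atTop : Filter A).NeBot := atTop_neBot_iff.mpr ⟨‹_›, ‹_›⟩
  refine le_of_forall_gt_imp_ge_of_dense fun c hc => ?_
  obtain ⟨c', hc'1, hc'2⟩ := exists_between hc
  have hch : ∀ x : K, ∃ G : Set X, IsOpen G ∧ (x : X) ∈ G ∧
      Filter.limsup (fun a => μ a G ^ (t a)) Filter.atTop < c' := by
    intro x
    have hx : vsup μ t (x : X) < c' :=
      lt_of_le_of_lt (le_biSup _ x.2) hc'1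
    simp only [vsup, iInf_lt_iff] at hx
    obtain ⟨G, hG, hxG, h⟩ := hx
    exact ⟨G, hG, hxG, h⟩
  choose Gf hGo hGm hGl using hch
  obtain ⟨F, hF⟩ := hK.elim_finite_subcover Gf hGo
    (fun y hy => Set.mem_iUnion.mpr ⟨⟨y, hy⟩, hGm ⟨y, hy⟩⟩)
  by_cases hFne : F.Nonempty
  · -- main case
    have hNpos : (0 : ℝ) < (F.card : ℝ) := by
      exact_mod_cast Nat.cast_pos.mpr hFne.card_pos
    have htend : Tendsto (fun a => (F.card : ℝ≥0∞) ^ (t a)) atTop (𝓝 1) := by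
      have h3 : (fun a => (F.card : ℝ≥0∞) ^ (t a))
          = fun a => ENNReal.ofReal ((F.card : ℝ) ^ (t a)) := by
        funext a
        rw [← ENNReal.ofReal_rpow_of_pos hNpos, ENNReal.ofReal_natCast]
      rw [h3]
      have h5 : Tendsto (fun a => (F.card : ℝ) ^ (t a)) atTop (𝓝 1) := by
        have heq : (fun a => (F.card : ℝ) ^ (t a))
            = fun a => Real.exp (Real.log (F.card : ℝ) * t a) := by
          funext a; exact Real.rpow_def_of_pos hNpos _
        rw [heq]
        have h1 : Tendsto (fun a => Real.log (F.card : ℝ) * t a) atTop (𝓝 0) := by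
          simpa using hto0.const_mul (Real.log (F.card : ℝ))
        have := (Real.continuous_exp.tendsto 0).comp h1; rw [Real.exp_zero] at this; exact this
      simpa using ENNReal.tendsto_ofReal h5
    have hev1 : ∀ᶠ a in atTop, ∀ i ∈ F, μ a (Gf i) ^ (t a) < c' :=
      (Filter.eventually_all_finset F).mpr fun i _ =>
        Filter.eventually_lt_of_limsup_lt (hGl i)
    have hev2 : ∀ᶠ a in atTop, μ a K ^ (t a) ≤ (F.card : ℝ≥0∞) ^ (t a) * c' := by
      filter_upwards [hev1] with a ha
      have hm : μ a K ≤ F.card • (F.sup fun i => μ a (Gf i)) := by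
        calc μ a K ≤ μ a (⋃ i ∈ F, Gf i) := measure_mono hF
          _ ≤ ∑ i ∈ F, μ a (Gf i) := measure_biUnion_finset_le F _
          _ ≤ F.card • (F.sup fun i => μ a (Gf i)) :=
              Finset.sum_le_card_nsmul F _ _ fun i hi => Finset.le_sup (f := fun i => μ a (Gf i)) hi
      have h6 := ENNReal.rpow_le_rpow hm (hpos a).le
      rw [nsmul_eq_mul, ENNReal.mul_rpow_of_nonneg _ _ (hpos a).le] at h6
      refine h6.trans ?_
      obtain ⟨i0, hi0F, hi0⟩ := F.exists_mem_eq_sup hFne (fun i => μ a (Gf i))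
      rw [show (F.sup fun i => μ a (Gf i)) ^ (t a) = μ a (Gf i0) ^ (t a) from by rw [hi0]]
      exact mul_le_mul_right (ha i0 hi0F).le _
    calc Filter.limsup (fun a => μ a K ^ (t a)) Filter.atTop
        ≤ Filter.limsup (fun a => (F.card : ℝ≥0∞) ^ (t a) * c') Filter.atTop :=
          Filter.limsup_le_limsup hev2
      _ = 1 * c' := (ENNReal.Tendsto.mul_const htend (Or.inl one_ne_zero)).limsup_eq
      _ = c' := one_mul c'
      _ ≤ c := hc'2.le
  · -- F empty
    rw [Finset.not_nonempty_iff_eq_empty] at hFne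
    have hKe : K = ∅ := by
      have := hF
      rw [hFne] at this
      simpa using this
    have hz : (fun a => μ a K ^ (t a)) = fun _ => (0 : ℝ≥0∞) := by
      funext a
      simp [hKe, ENNReal.zero_rpow_of_pos (hpos a)]
    rw [hz, Filter.limsup_const]
    exact zero_le

/-- The candidate rate function. -/
noncomputable def Jof (μ : A → Measure X) (t : A → ℝ) (x : X) : ℝ≥0∞ :=
  if vsup μ t x = 0 then ⊤ else ENNReal.ofReal ((- ENNReal.log (vsup μ t x)).toReal)

lemma Jof_coe (μ : A → Measure X) (t : A → ℝ)
    (hSub : ∀ a, μ a Set.univ ≤ 1) (hpos : ∀ a, 0 < t a) (x : X) :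
    ((Jof μ t x : ℝ≥0∞) : EReal) = - ENNReal.log (vsup μ t x) := by
  unfold Jof
  by_cases h0 : vsup μ t x = 0
  · simp [h0]
  · rw [if_neg h0]
    have h1 : vsup μ t x ≤ 1 := vsup_le_one μ t hSub hpos x
    have hetop : - ENNReal.log (vsup μ t x) ≠ ⊤ := by
      simp only [ne_eq, EReal.neg_eq_top_iff, ENNReal.log_eq_bot_iff]
      exact h0
    have hebot : - ENNReal.log (vsup μ t x) ≠ ⊥ := by
      simp only [ne_eq, EReal.neg_eq_bot_iff, ENNReal.log_eq_top_iff]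
      exact (h1.trans_lt ENNReal.one_lt_top).ne
    have hnon : (0 : EReal) ≤ - ENNReal.log (vsup μ t x) := by
      have hlog : ENNReal.log (vsup μ t x) ≤ 0 := ENNReal.log_le_zero_iff.mpr h1
      calc (0 : EReal) = -0 := neg_zero.symm
        _ ≤ - ENNReal.log (vsup μ t x) := EReal.neg_le_neg_iff.mpr hlog
    have hrnon : (0 : ℝ) ≤ (- ENNReal.log (vsup μ t x)).toReal := by
      simpa using EReal.toReal_le_toReal hnon (by simp) hetop
    rw [EReal.coe_ennreal_ofReal, max_eq_left hrnon, EReal.coe_toReal hetop hebot]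

lemma Jof_exp (μ : A → Measure X) (t : A → ℝ)
    (hSub : ∀ a, μ a Set.univ ≤ 1) (hpos : ∀ a, 0 < t a) (x : X) :
    EReal.exp (-(Jof μ t x : EReal)) = vsup μ t x := by
  rw [Jof_coe μ t hSub hpos x, neg_neg, ENNReal.exp_log]

end Statement15Aux

open Statement15Aux in
/-- Lemma (preliminaries), part (a): vague LDP holds iff `l₀ = l₁`, with rate function `l₀`. -/
theorem statement15
    {X : Type*} [TopologicalSpace X] [T2Space X] [LocallyCompactSpace X]
    [MeasurableSpace X] [BorelSpace X]
    {A : Type*} [Preorder A] [IsDirected A (· ≤ ·)] [Nonempty A]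
    (μ : A → Measure X) (t : A → ℝ)
    (hRadon : ∀ a, (μ a).InnerRegular) (hSub : ∀ a, μ a Set.univ ≤ 1)
    (hpos : ∀ a, 0 < t a) (hto0 : Tendsto t atTop (𝓝 (0 : ℝ))) :
    ((∃ J : X → ℝ≥0∞, VagueLDP μ t J) ↔ (∀ x : X, lZero μ t x = lOne μ t x)) ∧
    ((∀ x : X, lZero μ t x = lOne μ t x) →
      ∃ J : X → ℝ≥0∞, VagueLDP μ t J ∧ ∀ x : X, (J x : EReal) = lZero μ t x) := by
  haveI : (atTop : Filter A).NeBot := atTop_neBot_iff.mpr ⟨‹_›, ‹_›⟩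
  have hv_iff : ∀ x, (lZero μ t x = lOne μ t x ↔ vsup μ t x = vinf μ t x) := by
    intro x
    rw [lZero_eq, lOne_eq]
    constructor
    · intro h; exact ENNReal.log_injective (neg_injective h)
    · intro h; rw [h]
  -- the construction (second bullet)
  have hcon : (∀ x : X, lZero μ t x = lOne μ t x) →
      ∃ J : X → ℝ≥0∞, VagueLDP μ t J ∧ ∀ x : X, (J x : EReal) = lZero μ t x := by
    intro h
    have hv : ∀ x, vsup μ t x = vinf μ t x := fun x => (hv_iff x).mp (h x)
    refine ⟨Jof μ t, ⟨?_, ?_, ?_⟩, fun x => by rw [Jof_coe μ t hSub hpos x, lZero_eq]⟩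
    · -- lower semicontinuity
      intro x c hc
      have key : ∀ y : X, (c < Jof μ t y ↔ vsup μ t y < EReal.exp (-(c : EReal))) := by
        intro y
        rw [← EReal.coe_ennreal_lt_coe_ennreal_iff, Jof_coe μ t hSub hpos y,
          EReal.lt_neg_comm]
        conv_lhs => rw [show -(c : EReal) = ENNReal.log (EReal.exp (-(c : EReal))) from
          (EReal.log_exp _).symm]
        exact ENNReal.log_lt_log_iff
      have hvx : vsup μ t x < EReal.exp (-(c : EReal)) := (key x).mp hc
      obtain ⟨G, hG, hxG, hGall⟩ := exists_open_vsup_lt μ t hvx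
      filter_upwards [hG.mem_nhds hxG] with y hy
      exact (key y).mpr (hGall y hy)
    · -- upper bound on compacts
      intro K hK
      have hsup : (⨆ x ∈ K, EReal.exp (-(Jof μ t x : EReal))) = ⨆ x ∈ K, vsup μ t x := by
        refine iSup_congr fun x => iSup_congr fun _ => ?_
        exact Jof_exp μ t hSub hpos x
      rw [hsup]
      exact limsup_compact_le μ t hpos hto0 hK
    · -- lower bound on opens
      intro G hG
      refine iSup₂_le fun x hx => ?_
      rw [Jof_exp μ t hSub hpos x, hv x]
      exact vinf_le_liminf μ t hG hx
  refine ⟨⟨?_, fun h => (hcon h).elim fun J hJ => ⟨J, hJ.1⟩⟩, hcon⟩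
  rintro ⟨J, hLSC, hUB, hLB⟩ x
  rw [hv_iff]
  refine le_antisymm ?_ ?_
  · -- vsup ≤ vinf, via local compactness and the LDP
    refine le_iInf fun G => le_iInf fun hG => le_iInf fun hx => ?_
    obtain ⟨K, hKc, hxK, hKG⟩ := exists_compact_subset hG hx
    calc vsup μ t x
        ≤ Filter.limsup (fun a => μ a (interior K) ^ (t a)) Filter.atTop :=
          vsup_le_limsup μ t isOpen_interior hxK
      _ ≤ Filter.limsup (fun a => μ a K ^ (t a)) Filter.atTop :=
          Filter.limsup_le_limsup (Filter.Eventually.of_forall fun a =>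
            ENNReal.rpow_le_rpow (measure_mono interior_subset) (hpos a).le)
      _ ≤ ⨆ y ∈ K, EReal.exp (-(J y : EReal)) := hUB K hKc
      _ ≤ ⨆ y ∈ G, EReal.exp (-(J y : EReal)) := biSup_mono hKG
      _ ≤ Filter.liminf (fun a => μ a G ^ (t a)) Filter.atTop := hLB G hG
  · -- vinf ≤ vsup
    exact iInf_mono fun G => iInf_mono fun _ => iInf_mono fun _ => liminf_le_limsup

end
end

section
/- If (μ_α) satisfies a vague large deviation principle with powers (t_α) and rate function J, and (μ_α) is exponentially tight with respect to (t_α), then (μ_α) satisfies a narrow large deviation principle with the same powers (t_α) and the same rate function J. -/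
open Filter MeasureTheory Topology Set
open scoped ENNReal NNReal

noncomputable section

variable {X : Type*} [TopologicalSpace X] [MeasurableSpace X]
variable {A : Type*} [Preorder A]

/-- Lemma (preliminaries), part (b): vague LDP + exponential tightness implies narrow LDP. -/
theorem statement16
    {X : Type*} [TopologicalSpace X] [T2Space X] [MeasurableSpace X] [BorelSpace X]
    {A : Type*} [Preorder A] [IsDirected A (· ≤ ·)] [Nonempty A]
    (μ : A → Measure X) (t : A → ℝ)
    (hRadon : ∀ a, (μ a).InnerRegular) (hSub : ∀ a, μ a Set.univ ≤ 1)
    (hpos : ∀ a, 0 < t a) (hto0 : Tendsto t atTop (𝓝 (0 : ℝ)))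
    (J : X → ℝ≥0∞) (hvague : VagueLDP μ t J) (htight : ExpTight μ t) :
    NarrowLDP μ t J := by
  obtain ⟨hlsc, hupper, hlower⟩ := hvague
  refine ⟨hlsc, ?_, hlower⟩
  intro F hF
  set S : ℝ≥0∞ := ⨆ x ∈ F, EReal.exp (-(J x : EReal)) with hS
  refine ENNReal.le_of_forall_pos_le_add fun ε hε _ => ?_
  obtain ⟨K, hK, hKtail⟩ := htight ε (by exact_mod_cast hε)
  -- pointwise bound
  have hpt : ∀ a, μ a F ^ t a ≤
      (2 : ℝ≥0∞) ^ t a * ((μ a (F ∩ K) ^ t a) ⊔ (μ a Kᶜ ^ t a)) := by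
    intro a
    have h1 : μ a F ≤ 2 * (μ a (F ∩ K) ⊔ μ a Kᶜ) := by
      calc μ a F ≤ μ a ((F ∩ K) ∪ Kᶜ) := by
            apply measure_mono
            intro x hx
            by_cases hxK : x ∈ K
            · exact Or.inl ⟨hx, hxK⟩
            · exact Or.inr hxK
        _ ≤ μ a (F ∩ K) + μ a Kᶜ := measure_union_le _ _
        _ ≤ (μ a (F ∩ K) ⊔ μ a Kᶜ) + (μ a (F ∩ K) ⊔ μ a Kᶜ) :=
            add_le_add le_sup_left le_sup_right
        _ = 2 * (μ a (F ∩ K) ⊔ μ a Kᶜ) := (two_mul _).symm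
    have h2 : μ a F ^ t a ≤ (2 * (μ a (F ∩ K) ⊔ μ a Kᶜ)) ^ t a :=
      ENNReal.rpow_le_rpow h1 (hpos a).le
    have h3 : (μ a (F ∩ K) ⊔ μ a Kᶜ) ^ t a = (μ a (F ∩ K) ^ t a) ⊔ (μ a Kᶜ ^ t a) := by
      rcases le_total (μ a (F ∩ K)) (μ a Kᶜ) with h | h
      · rw [sup_eq_right.2 h, sup_eq_right.2 (ENNReal.rpow_le_rpow h (hpos a).le)]
      · rw [sup_eq_left.2 h, sup_eq_left.2 (ENNReal.rpow_le_rpow h (hpos a).le)]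
    rw [ENNReal.mul_rpow_of_nonneg _ _ (hpos a).le, h3] at h2
    exact h2
  -- limsup of 2^t is 1
  have h2t : Tendsto (fun a => (2 : ℝ≥0∞) ^ t a) atTop (𝓝 1) := by
    have e : ∀ a, (2 : ℝ≥0∞) ^ t a = ENNReal.ofReal ((2 : ℝ) ^ t a) := by
      intro a
      rw [← ENNReal.ofReal_rpow_of_pos (by norm_num : (0:ℝ) < 2)]
      norm_num
    simp only [e]
    have : Tendsto (fun a => (2 : ℝ) ^ t a) atTop (𝓝 ((2:ℝ) ^ (0:ℝ))) :=
      (Real.continuousAt_const_rpow (by norm_num : (2:ℝ) ≠ 0)).tendsto.comp hto0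
    rw [Real.rpow_zero] at this
    have := (ENNReal.continuous_ofReal.tendsto 1).comp this
    simpa [Function.comp_def] using this
  have h2tlim : Filter.limsup (fun a => (2 : ℝ≥0∞) ^ t a) atTop = 1 := h2t.limsup_eq
  -- main estimate
  have hmain : Filter.limsup (fun a => μ a F ^ t a) atTop ≤
      Filter.limsup (fun a => (2 : ℝ≥0∞) ^ t a) atTop *
        Filter.limsup (fun a => (μ a (F ∩ K) ^ t a) ⊔ (μ a Kᶜ ^ t a)) atTop := by
    refine le_trans (Filter.limsup_le_limsup (Eventually.of_forall hpt)) ?_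
    exact ENNReal.limsup_mul_le' (Or.inl (by simp [h2tlim])) (Or.inl (by simp [h2tlim]))
  rw [h2tlim, one_mul, limsup_max] at hmain
  have hcomp : Filter.limsup (fun a => μ a (F ∩ K) ^ t a) atTop ≤ S := by
    refine le_trans (hupper _ (hK.inter_left hF)) ?_
    exact iSup_le fun x => iSup_le fun hx => le_iSup₂ (f := fun x (_ : x ∈ F) =>
      EReal.exp (-(J x : EReal))) x hx.1
  calc Filter.limsup (fun a => μ a F ^ t a) atTop
      ≤ Filter.limsup (fun a => μ a (F ∩ K) ^ t a) atTop ⊔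
          Filter.limsup (fun a => μ a Kᶜ ^ t a) atTop := hmain
    _ ≤ S ⊔ ENNReal.ofReal ε := sup_le_sup hcomp hKtail.le
    _ ≤ S + ENNReal.ofReal ε := sup_le le_self_add le_add_self
    _ = S + ε := by rw [ENNReal.ofReal_coe_nnreal]


end
end

section
/- Let X be a Hausdorff topological space and S a set of continuous functions h : X → [-∞,∞) such that Λ(h) exists for every h ∈ S. Then Λ(h) ≥ sup_{x ∈ X} (h(x) − l_0(x)) for every h ∈ S, and consequently Λ|_S*(x) ≤ l_0(x) for all x ∈ X. In particular, if X = ℝ, G ⊂ ℝ is a nonempty open interval on which L exists and is finite, and S ⊇ {h_λ : λ ∈ G}, then L|_G*(x) ≤ Λ|_S*(x) ≤ l_0(x) for all x ∈ ℝ. -/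
open Filter MeasureTheory Topology Set
open scoped ENNReal NNReal

noncomputable section

variable {X : Type*} [TopologicalSpace X] [MeasurableSpace X]
variable {A : Type*} [Preorder A]

section AuxLemmas

variable {Y : Type*} [TopologicalSpace Y] [MeasurableSpace Y] [OpensMeasurableSpace Y]
variable {B : Type*} [Preorder B]

lemma lZero_nonneg (μ : B → Measure Y) (t : B → ℝ) (hSub : ∀ a, μ a Set.univ ≤ 1)
    (hpos : ∀ a, 0 < t a) (x : Y) : (0 : EReal) ≤ lZero μ t x := by
  have h1 : (⨅ (G : Set Y) (_ : IsOpen G) (_ : x ∈ G),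
      Filter.limsup (fun a => μ a G ^ (t a)) Filter.atTop) ≤ 1 := by
    refine le_trans (iInf₂_le_of_le Set.univ isOpen_univ (iInf_le _ (Set.mem_univ x))) ?_
    refine Filter.limsup_le_of_le (by isBoundedDefault) (Filter.Eventually.of_forall fun a => ?_)
    exact ENNReal.rpow_le_one (hSub a) (hpos a).le
  have h2 := ENNReal.log_monotone h1
  rw [ENNReal.log_one] at h2
  rw [lZero]
  exact EReal.le_neg_of_le_neg (by simpa using h2)

lemma key_ineq (μ : B → Measure Y) (t : B → ℝ)
    (hSub : ∀ a, μ a Set.univ ≤ 1) (hpos : ∀ a, 0 < t a)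
    (h : Y → EReal) (hc : Continuous h) (x : Y) (hx : h x ≠ ⊤) :
    h x - lZero μ t x ≤ LambdaBar μ t h := by
  by_cases hbot : h x = ⊥
  · rw [hbot, EReal.bot_sub]; exact bot_le
  lift h x to ℝ using ⟨hx, hbot⟩ with r hr
  by_contra hltc
  push_neg at hltc
  have hl0top : lZero μ t x ≠ ⊤ := by
    intro H
    rw [H, EReal.sub_top] at hltc
    exact (not_lt_bot hltc).elim
  have hl0bot : lZero μ t x ≠ ⊥ :=
    fun H => by simpa [H] using lZero_nonneg μ t hSub hpos x
  lift lZero μ t x to ℝ using ⟨hl0top, hl0bot⟩ with v hv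
  have hv0 : (0:ℝ) ≤ v := by
    have h0 := lZero_nonneg μ t hSub hpos x
    rw [← hv] at h0
    exact_mod_cast h0
  rw [← EReal.coe_sub] at hltc
  obtain ⟨s, hs1, hs2⟩ := EReal.exists_between_coe_real hltc
  have hs2' : s < r - v := by exact_mod_cast hs2
  set d : ℝ := s + v with hd
  have hdr : d < r := by linarith
  set G : Set Y := h ⁻¹' (Set.Ioi ((d:ℝ) : EReal)) with hG
  have hGopen : IsOpen G := isOpen_Ioi.preimage hc
  have hxG : x ∈ G := by
    simp only [hG, Set.mem_preimage, Set.mem_Ioi, ← hr]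
    exact_mod_cast hdr
  have hmain : ∀ a, EReal.exp ((d:ℝ) : EReal) * (μ a G) ^ (t a) ≤ expPow μ t h a := by
    intro a
    have hT : (0:ℝ) < t a := hpos a
    have hTinv : (0:ℝ) ≤ (t a)⁻¹ := (inv_pos.mpr hT).le
    have step1 : ENNReal.ofReal (Real.exp ((t a)⁻¹ * d)) * μ a G
        ≤ ∫⁻ y, EReal.exp ((((t a)⁻¹ : ℝ) : EReal) * h y) ∂(μ a) := by
      calc ENNReal.ofReal (Real.exp ((t a)⁻¹ * d)) * μ a G
          = ∫⁻ _ in G, ENNReal.ofReal (Real.exp ((t a)⁻¹ * d)) ∂(μ a) :=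
            (setLIntegral_const _ _).symm
        _ ≤ ∫⁻ y in G, EReal.exp ((((t a)⁻¹ : ℝ) : EReal) * h y) ∂(μ a) := by
            refine setLIntegral_mono' hGopen.measurableSet fun y hy => ?_
            have h1 : ((((t a)⁻¹ * d : ℝ)) : EReal) ≤ (((t a)⁻¹ : ℝ) : EReal) * h y := by
              rw [EReal.coe_mul]
              exact mul_le_mul_of_nonneg_left (le_of_lt hy) (by exact_mod_cast hTinv)
            calc ENNReal.ofReal (Real.exp ((t a)⁻¹ * d))
                = EReal.exp ((((t a)⁻¹ * d : ℝ)) : EReal) := (EReal.exp_coe _).symm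
              _ ≤ _ := EReal.exp_monotone h1
        _ ≤ _ := setLIntegral_le_lintegral _ _
    have step2 := ENNReal.rpow_le_rpow step1 hT.le
    rw [ENNReal.mul_rpow_of_nonneg _ _ hT.le,
      ENNReal.ofReal_rpow_of_pos (Real.exp_pos _), ← Real.exp_mul] at step2
    have harith : (t a)⁻¹ * d * t a = d := by field_simp
    rw [harith] at step2
    simpa [expPow, EReal.exp_coe] using step2
  have hlim : EReal.exp ((d:ℝ) : EReal) * Filter.limsup (fun a => μ a G ^ (t a)) Filter.atTop
      ≤ Filter.limsup (expPow μ t h) Filter.atTop := by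
    rw [← ENNReal.limsup_const_mul_of_ne_top (by simp : EReal.exp ((d:ℝ) : EReal) ≠ ⊤)]
    exact Filter.limsup_le_limsup (Filter.Eventually.of_forall hmain)
  have hinf : (⨅ (G' : Set Y) (_ : IsOpen G') (_ : x ∈ G'),
      Filter.limsup (fun a => μ a G' ^ (t a)) Filter.atTop)
      ≤ Filter.limsup (fun a => μ a G ^ (t a)) Filter.atTop :=
    iInf₂_le_of_le G hGopen (iInf_le _ hxG)
  have hlog : -((v:ℝ) : EReal) = ENNReal.log (⨅ (G' : Set Y) (_ : IsOpen G') (_ : x ∈ G'),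
      Filter.limsup (fun a => μ a G' ^ (t a)) Filter.atTop) := by
    have h5 := hv
    rw [lZero] at h5
    rw [h5, neg_neg]
  have hfinal : (s : EReal) ≤ LambdaBar μ t h := by
    calc (s : EReal) = ((d:ℝ) : EReal) - ((v:ℝ) : EReal) := by
          rw [← EReal.coe_sub, hd]; norm_num
      _ = ((d:ℝ) : EReal) + (-((v:ℝ) : EReal)) := sub_eq_add_neg _ _
      _ = ((d:ℝ) : EReal) + ENNReal.log (⨅ (G' : Set Y) (_ : IsOpen G') (_ : x ∈ G'),
            Filter.limsup (fun a => μ a G' ^ (t a)) Filter.atTop) := by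
          rw [hlog]
      _ ≤ ((d:ℝ) : EReal) + ENNReal.log (Filter.limsup (fun a => μ a G ^ (t a)) Filter.atTop) :=
          add_le_add_right (ENNReal.log_monotone hinf) _
      _ = ENNReal.log (EReal.exp ((d:ℝ) : EReal)
            * Filter.limsup (fun a => μ a G ^ (t a)) Filter.atTop) := by
          rw [ENNReal.log_mul_add, EReal.log_exp]
      _ ≤ ENNReal.log (Filter.limsup (expPow μ t h) Filter.atTop) := ENNReal.log_monotone hlim
      _ = LambdaBar μ t h := rfl
  exact absurd hs1 (not_lt.mpr hfinal)

lemma key_lamstar (μ : B → Measure Y) (t : B → ℝ)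
    (hSub : ∀ a, μ a Set.univ ≤ 1) (hpos : ∀ a, 0 < t a)
    (S : Set (Y → EReal)) (hScont : ∀ h ∈ S, Continuous h)
    (hStop : ∀ h ∈ S, ∀ x, h x ≠ ⊤) (x : Y) :
    LamStar μ t S x ≤ lZero μ t x := by
  refine iSup₂_le fun h hS => ?_
  have h1 := key_ineq μ t hSub hpos h (hScont h hS) x (hStop h hS x)
  by_cases htop : lZero μ t x = ⊤
  · rw [htop]; exact le_top
  by_cases hLtop : LambdaBar μ t h = ⊤
  · rw [hLtop, EReal.sub_top]; exact bot_le
  · have h2 : h x ≤ LambdaBar μ t h + lZero μ t x :=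
      (EReal.sub_le_iff_le_add (Or.inr hLtop) (Or.inl htop)).mp h1
    exact EReal.sub_le_of_le_add' h2

end AuxLemmas

/-- Basic inequalities: `Λ(h) ≥ sup_x (h(x) − l₀(x))`, hence `Λ|_S^* ≤ l₀`; in particular,
on `ℝ`, `L|_G^* ≤ Λ|_S^* ≤ l₀` when `S` contains all `h_λ`, `λ ∈ G`. -/


theorem statement18
    -- the general Hausdorff space part
    {X : Type*} [TopologicalSpace X] [T2Space X] [MeasurableSpace X] [BorelSpace X]
    {A : Type*} [Preorder A] [IsDirected A (· ≤ ·)] [Nonempty A]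
    (μ : A → Measure X) (t : A → ℝ)
    (hRadon : ∀ a, (μ a).InnerRegular) (hSub : ∀ a, μ a Set.univ ≤ 1)
    (hpos : ∀ a, 0 < t a) (hto0 : Tendsto t atTop (𝓝 (0 : ℝ)))
    (S : Set (X → EReal)) (hScont : ∀ h ∈ S, Continuous h) (hStop : ∀ h ∈ S, ∀ x, h x ≠ ⊤)
    (hSex : ∀ h ∈ S, LambdaExists μ t h)
    -- the particular case `X = ℝ`
    {A' : Type*} [Preorder A'] [IsDirected A' (· ≤ ·)] [Nonempty A']
    (μ' : A' → Measure ℝ) (t' : A' → ℝ)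
    (hRadon' : ∀ a, (μ' a).InnerRegular) (hSub' : ∀ a, μ' a Set.univ ≤ 1)
    (hpos' : ∀ a, 0 < t' a) (hto0' : Tendsto t' atTop (𝓝 (0 : ℝ)))
    (G : Set ℝ) (hGopen : IsOpen G) (hGint : G.OrdConnected) (hGne : G.Nonempty)
    (S' : Set (ℝ → EReal)) (hScont' : ∀ h ∈ S', Continuous h)
    (hStop' : ∀ h ∈ S', ∀ x, h x ≠ ⊤)
    (hSex' : ∀ h ∈ S', LambdaExists μ' t' h)
    (hSlin' : ∀ l ∈ G, hlin l ∈ S')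
    (L : ℝ → ℝ) (hL : ∀ l ∈ G, LambdaBar μ' t' (hlin l) = ((L l : ℝ) : EReal)) :
    (∀ h ∈ S, (⨆ x : X, (h x - lZero μ t x)) ≤ LambdaBar μ t h) ∧
    (∀ x : X, LamStar μ t S x ≤ lZero μ t x) ∧
    (∀ x : ℝ, LegG L G x ≤ LamStar μ' t' S' x ∧ LamStar μ' t' S' x ≤ lZero μ' t' x) := by
  refine ⟨fun h hS => iSup_le fun x =>
      key_ineq μ t hSub hpos h (hScont h hS) x (hStop h hS x),
    fun x => key_lamstar μ t hSub hpos S hScont hStop x,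
    fun x => ⟨?_, key_lamstar μ' t' hSub' hpos' S' hScont' hStop' x⟩⟩
  refine iSup₂_le fun l hl => ?_
  have heq : ((l * x - L l : ℝ) : EReal) = hlin l x - LambdaBar μ' t' (hlin l) := by
    rw [hL l hl, hlin, EReal.coe_sub]
  exact le_iSup₂_of_le (hlin l) (hSlin' l hl) (le_of_eq heq)


end
end

section
/- Assume that L(λ) exists and is finite for every λ in a nonempty open interval G ⊂ ℝ. Let G₀ be a nonempty open interval and λ₁, λ₂ ∈ G∖{0} with λ₁ < λ < λ₂ for all λ ∈ G₀. Then the family {h_λ : λ ∈ G₀} satisfies the tail condition for (μ_α^{t_α}), i.e. for every ε > 0 there is a real M such that limsup_α (∫_{{x : λx > M}} e^{λx/t_α} μ_α(dx))^{t_α} < ε for all λ ∈ G₀. -/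
open Filter MeasureTheory Topology Set
open scoped ENNReal NNReal

noncomputable section

variable {X : Type*} [TopologicalSpace X] [MeasurableSpace X]
variable {A : Type*} [Preorder A]

/-- The family `{h_λ : λ ∈ G₀}` satisfies the (uniform) tail condition. -/
theorem statement19
    {A : Type*} [Preorder A] [IsDirected A (· ≤ ·)] [Nonempty A]
    (μ : A → Measure ℝ) (t : A → ℝ)
    (hRadon : ∀ a, (μ a).InnerRegular) (hSub : ∀ a, μ a Set.univ ≤ 1)
    (hpos : ∀ a, 0 < t a) (hto0 : Tendsto t atTop (𝓝 (0 : ℝ)))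
    (G : Set ℝ) (hGopen : IsOpen G) (hGint : G.OrdConnected) (hGne : G.Nonempty)
    (L : ℝ → ℝ)
    (hL : ∀ l ∈ G, LambdaExists μ t (hlin l) ∧ LambdaBar μ t (hlin l) = ((L l : ℝ) : EReal))
    (G₀ : Set ℝ) (hG₀open : IsOpen G₀) (hG₀int : G₀.OrdConnected) (hG₀ne : G₀.Nonempty)
    (l₁ l₂ : ℝ) (hl₁G : l₁ ∈ G) (hl₁0 : l₁ ≠ 0) (hl₂G : l₂ ∈ G) (hl₂0 : l₂ ≠ 0)
    (hbetween : ∀ l ∈ G₀, l₁ < l ∧ l < l₂) :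
    TailCondition μ t {h : ℝ → EReal | ∃ l ∈ G₀, h = hlin l} := by
  intro ε hε
  -- choose η > 0 with (1+η)*l₁ ∈ G and (1+η)*l₂ ∈ G
  obtain ⟨δ₁, hδ₁pos, hδ₁⟩ := Metric.isOpen_iff.1 hGopen l₁ hl₁G
  obtain ⟨δ₂, hδ₂pos, hδ₂⟩ := Metric.isOpen_iff.1 hGopen l₂ hl₂G
  have habs1 : 0 < |l₁| := abs_pos.2 hl₁0
  have habs2 : 0 < |l₂| := abs_pos.2 hl₂0
  set η : ℝ := min (δ₁ / (2 * |l₁|)) (δ₂ / (2 * |l₂|)) with hηdef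
  have hηpos : 0 < η := lt_min (by positivity) (by positivity)
  have hmem : ∀ (l : ℝ) (δ : ℝ), 0 < δ → 0 < |l| → η ≤ δ / (2 * |l|) →
      Metric.ball l δ ⊆ G → (1 + η) * l ∈ G := by
    intro l δ hδ habs hle hball
    apply hball
    rw [Metric.mem_ball, Real.dist_eq]
    have h1 : (1 + η) * l - l = η * l := by ring
    rw [h1, abs_mul, abs_of_pos hηpos]
    calc η * |l| ≤ δ / (2 * |l|) * |l| := by gcongr
      _ = δ / 2 := by field_simp
      _ < δ := by linarith
  have hmem1 : (1 + η) * l₁ ∈ G := hmem l₁ δ₁ hδ₁pos habs1 (min_le_left _ _) hδ₁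
  have hmem2 : (1 + η) * l₂ ∈ G := hmem l₂ δ₂ hδ₂pos habs2 (min_le_right _ _) hδ₂
  set p₁ : ℝ := (1 + η) * l₁ with hp₁def
  set p₂ : ℝ := (1 + η) * l₂ with hp₂def
  -- the limsup of expPow at p₁, p₂ is finite
  have hlim : ∀ (p : ℝ), p ∈ G →
      Filter.limsup (expPow μ t (hlin p)) Filter.atTop = ENNReal.ofReal (Real.exp (L p)) := by
    intro p hp
    have h := congrArg EReal.exp (hL p hp).2
    rwa [LambdaBar, ENNReal.exp_log, EReal.exp_coe] at h
  set R₁ : ℝ := Real.exp (L p₁) + 1 with hR₁def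
  set R₂ : ℝ := Real.exp (L p₂) + 1 with hR₂def
  have hR₁pos : 0 < R₁ := by positivity
  have hR₂pos : 0 < R₂ := by positivity
  have hev1 : ∀ᶠ a in Filter.atTop, expPow μ t (hlin p₁) a < ENNReal.ofReal R₁ := by
    refine Filter.eventually_lt_of_limsup_lt ?_ (by isBoundedDefault)
    rw [hlim p₁ hmem1]
    exact (ENNReal.ofReal_lt_ofReal_iff hR₁pos).2 (by simp [hR₁def])
  have hev2 : ∀ᶠ a in Filter.atTop, expPow μ t (hlin p₂) a < ENNReal.ofReal R₂ := by
    refine Filter.eventually_lt_of_limsup_lt ?_ (by isBoundedDefault)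
    rw [hlim p₂ hmem2]
    exact (ENNReal.ofReal_lt_ofReal_iff hR₂pos).2 (by simp [hR₂def])
  have hevt : ∀ᶠ a in Filter.atTop, t a < 1 :=
    hto0.eventually (Iio_mem_nhds one_pos)
  -- choose M
  set R : ℝ := 2 * (R₁ + R₂) with hRdef
  have hRpos : 0 < R := by positivity
  set M : ℝ := (-Real.log (ε / R)) / η + 1 with hMdef
  have hexpM : Real.exp (-(η * M)) * R < ε := by
    have h1 : η * M = -Real.log (ε / R) + η := by
      rw [hMdef]; field_simp
    have h2 : Real.exp (-(η * M)) < Real.exp (Real.log (ε / R)) := by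
      apply Real.exp_lt_exp.2
      rw [h1]; linarith
    rw [Real.exp_log (by positivity)] at h2
    calc Real.exp (-(η * M)) * R < ε / R * R := by
          apply mul_lt_mul_of_pos_right h2 hRpos
      _ = ε := by field_simp
  refine ⟨M, ?_⟩
  rintro h ⟨l, hlG₀, rfl⟩
  obtain ⟨hll₁, hll₂⟩ := hbetween l hlG₀
  -- main eventual bound
  have hev : ∀ᶠ a in Filter.atTop,
      (∫⁻ x in {x | (M : EReal) < hlin l x},
          EReal.exp ((((t a)⁻¹ : ℝ) : EReal) * hlin l x) ∂(μ a)) ^ (t a)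
        ≤ ENNReal.ofReal (Real.exp (-(η * M)) * R) := by
    filter_upwards [hev1, hev2, hevt] with a ha1 ha2 hat
    set τ : ℝ := t a with hτdef
    have hτ : 0 < τ := hpos a
    have hτ1 : τ ≤ 1 := hat.le
    have hτinv : 0 < τ⁻¹ := inv_pos.2 hτ
    have hcoe : ∀ (c x : ℝ),
        EReal.exp (((τ⁻¹ : ℝ) : EReal) * hlin c x)
          = ENNReal.ofReal (Real.exp (τ⁻¹ * (c * x))) := by
      intro c x
      rw [hlin, ← EReal.coe_mul, EReal.exp_coe]
    set u : ℝ → ℝ≥0∞ := fun x => ENNReal.ofReal (Real.exp (τ⁻¹ * (p₁ * x))) with hudef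
    set v : ℝ → ℝ≥0∞ := fun x => ENNReal.ofReal (Real.exp (τ⁻¹ * (p₂ * x))) with hvdef
    have hum : Measurable u := by
      apply Measurable.ennreal_ofReal
      exact (Real.continuous_exp.comp (continuous_const.mul
        (continuous_const.mul continuous_id))).measurable
    have hvm : Measurable v := by
      apply Measurable.ennreal_ofReal
      exact (Real.continuous_exp.comp (continuous_const.mul
        (continuous_const.mul continuous_id))).measurable
    set c₀ : ℝ≥0∞ := ENNReal.ofReal (Real.exp (-(η * M) * τ⁻¹)) with hc₀def
    set J₁ : ℝ≥0∞ := ∫⁻ x, u x ∂(μ a) with hJ₁def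
    set J₂ : ℝ≥0∞ := ∫⁻ x, v x ∂(μ a) with hJ₂def
    -- pointwise bound on the set
    have hpt : ∀ x ∈ {x : ℝ | (M : EReal) < hlin l x},
        ENNReal.ofReal (Real.exp (τ⁻¹ * (l * x))) ≤ c₀ * (u x + v x) := by
      intro x hx
      have hx' : M < l * x := by
        simpa only [hlin, Set.mem_setOf_eq, EReal.coe_lt_coe_iff] using hx
      have key : τ⁻¹ * (l * x) ≤ -(η * M) * τ⁻¹ + τ⁻¹ * ((1 + η) * l * x) := by
        have h2 : η * τ⁻¹ * M ≤ η * τ⁻¹ * (l * x) :=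
          mul_le_mul_of_nonneg_left hx'.le (by positivity)
        nlinarith [h2]
      have key2 : (1 + η) * l * x ≤ p₁ * x ∨ (1 + η) * l * x ≤ p₂ * x := by
        rcases le_total 0 x with hx0 | hx0
        · right
          apply mul_le_mul_of_nonneg_right _ hx0
          have : (0:ℝ) < 1 + η := by linarith
          nlinarith
        · left
          apply mul_le_mul_of_nonpos_right _ hx0
          have : (0:ℝ) < 1 + η := by linarith
          nlinarith
      have hsum : Real.exp (τ⁻¹ * ((1 + η) * l * x))
          ≤ Real.exp (τ⁻¹ * (p₁ * x)) + Real.exp (τ⁻¹ * (p₂ * x)) := by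
        rcases key2 with hc | hc
        · have h3 : Real.exp (τ⁻¹ * ((1 + η) * l * x)) ≤ Real.exp (τ⁻¹ * (p₁ * x)) :=
            Real.exp_le_exp.2 (mul_le_mul_of_nonneg_left hc hτinv.le)
          linarith [Real.exp_pos (τ⁻¹ * (p₂ * x))]
        · have h3 : Real.exp (τ⁻¹ * ((1 + η) * l * x)) ≤ Real.exp (τ⁻¹ * (p₂ * x)) :=
            Real.exp_le_exp.2 (mul_le_mul_of_nonneg_left hc hτinv.le)
          linarith [Real.exp_pos (τ⁻¹ * (p₁ * x))]
      have hreal : Real.exp (τ⁻¹ * (l * x))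
          ≤ Real.exp (-(η * M) * τ⁻¹) *
            (Real.exp (τ⁻¹ * (p₁ * x)) + Real.exp (τ⁻¹ * (p₂ * x))) := by
        calc Real.exp (τ⁻¹ * (l * x))
            ≤ Real.exp (-(η * M) * τ⁻¹ + τ⁻¹ * ((1 + η) * l * x)) := Real.exp_le_exp.2 key
          _ = Real.exp (-(η * M) * τ⁻¹) * Real.exp (τ⁻¹ * ((1 + η) * l * x)) := Real.exp_add _ _
          _ ≤ _ := mul_le_mul_of_nonneg_left hsum (Real.exp_pos _).le
      calc ENNReal.ofReal (Real.exp (τ⁻¹ * (l * x)))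
          ≤ ENNReal.ofReal (Real.exp (-(η * M) * τ⁻¹) *
              (Real.exp (τ⁻¹ * (p₁ * x)) + Real.exp (τ⁻¹ * (p₂ * x)))) :=
            ENNReal.ofReal_le_ofReal hreal
        _ = c₀ * (u x + v x) := by
            rw [ENNReal.ofReal_mul (Real.exp_pos _).le,
              ENNReal.ofReal_add (Real.exp_pos _).le (Real.exp_pos _).le]
    -- integral bound
    have hint : (∫⁻ x in {x | (M : EReal) < hlin l x},
        EReal.exp (((τ⁻¹ : ℝ) : EReal) * hlin l x) ∂(μ a)) ≤ c₀ * (J₁ + J₂) := by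
      calc (∫⁻ x in {x | (M : EReal) < hlin l x},
            EReal.exp (((τ⁻¹ : ℝ) : EReal) * hlin l x) ∂(μ a))
          = ∫⁻ x in {x | (M : EReal) < hlin l x},
              ENNReal.ofReal (Real.exp (τ⁻¹ * (l * x))) ∂(μ a) := by
            simp_rw [hcoe]
        _ ≤ ∫⁻ x in {x | (M : EReal) < hlin l x}, c₀ * (u x + v x) ∂(μ a) :=
            setLIntegral_mono ((hum.add hvm).const_mul c₀) hpt
        _ ≤ ∫⁻ x, c₀ * (u x + v x) ∂(μ a) := setLIntegral_le_lintegral _ _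
        _ = c₀ * (J₁ + J₂) := by
            rw [lintegral_const_mul' _ _ ENNReal.ofReal_ne_top, lintegral_add_left hum]
    -- take the power τ
    have hc₀pow : c₀ ^ τ = ENNReal.ofReal (Real.exp (-(η * M))) := by
      rw [hc₀def, ENNReal.ofReal_rpow_of_pos (Real.exp_pos _)]
      congr 1
      rw [Real.rpow_def_of_pos (Real.exp_pos _), Real.log_exp]
      congr 1
      field_simp
    have hJpow : (J₁ + J₂) ^ τ ≤ 2 * (J₁ ^ τ + J₂ ^ τ) := by
      have h2max : J₁ + J₂ ≤ 2 * max J₁ J₂ := by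
        rw [two_mul]
        exact add_le_add (le_max_left _ _) (le_max_right _ _)
      calc (J₁ + J₂) ^ τ ≤ (2 * max J₁ J₂) ^ τ := ENNReal.rpow_le_rpow h2max hτ.le
        _ = 2 ^ τ * (max J₁ J₂) ^ τ := ENNReal.mul_rpow_of_nonneg _ _ hτ.le
        _ ≤ 2 * (J₁ ^ τ + J₂ ^ τ) := by
            apply mul_le_mul'
            · calc (2 : ℝ≥0∞) ^ τ ≤ 2 ^ (1 : ℝ) :=
                  ENNReal.rpow_le_rpow_of_exponent_le one_le_two hτ1
                _ = 2 := ENNReal.rpow_one 2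
            · rcases le_total J₁ J₂ with hJ | hJ
              · rw [max_eq_right hJ]; exact le_add_self
              · rw [max_eq_left hJ]; exact le_add_right le_rfl
      -- done
    have hJ₁lt : J₁ ^ τ ≤ ENNReal.ofReal R₁ := by
      have : expPow μ t (hlin p₁) a = J₁ ^ τ := by
        rw [expPow]
        simp_rw [← hτdef, hcoe]
        rfl
      rw [← this]
      exact ha1.le
    have hJ₂lt : J₂ ^ τ ≤ ENNReal.ofReal R₂ := by
      have : expPow μ t (hlin p₂) a = J₂ ^ τ := by
        rw [expPow]
        simp_rw [← hτdef, hcoe]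
        rfl
      rw [← this]
      exact ha2.le
    calc (∫⁻ x in {x | (M : EReal) < hlin l x},
          EReal.exp ((((t a)⁻¹ : ℝ) : EReal) * hlin l x) ∂(μ a)) ^ (t a)
        = (∫⁻ x in {x | (M : EReal) < hlin l x},
            EReal.exp (((τ⁻¹ : ℝ) : EReal) * hlin l x) ∂(μ a)) ^ τ := by rw [← hτdef]
      _ ≤ (c₀ * (J₁ + J₂)) ^ τ := ENNReal.rpow_le_rpow hint hτ.le
      _ = c₀ ^ τ * (J₁ + J₂) ^ τ := ENNReal.mul_rpow_of_nonneg _ _ hτ.le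
      _ ≤ ENNReal.ofReal (Real.exp (-(η * M))) * (2 * (J₁ ^ τ + J₂ ^ τ)) := by
          rw [hc₀pow]; exact mul_le_mul' le_rfl hJpow
      _ ≤ ENNReal.ofReal (Real.exp (-(η * M))) *
            (2 * (ENNReal.ofReal R₁ + ENNReal.ofReal R₂)) := by
          exact mul_le_mul' le_rfl (mul_le_mul' le_rfl (add_le_add hJ₁lt hJ₂lt))
      _ = ENNReal.ofReal (Real.exp (-(η * M)) * R) := by
          rw [← ENNReal.ofReal_add hR₁pos.le hR₂pos.le, hRdef,
            ENNReal.ofReal_mul (Real.exp_pos _).le, ENNReal.ofReal_mul (by norm_num : (0:ℝ) ≤ 2),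
            ENNReal.ofReal_ofNat]
  calc Filter.limsup (fun a =>
        (∫⁻ x in {x | (M : EReal) < hlin l x},
            EReal.exp ((((t a)⁻¹ : ℝ) : EReal) * hlin l x) ∂(μ a)) ^ (t a)) Filter.atTop
      ≤ ENNReal.ofReal (Real.exp (-(η * M)) * R) := Filter.limsup_le_of_le (by isBoundedDefault) hev
    _ < ENNReal.ofReal ε := (ENNReal.ofReal_lt_ofReal_iff hε).2 hexpM

end
end
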